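/- arXiv:1112.0347 — 2 statements merged into one kernel-verified Lean document; each statement's English description precedes it below -/
import Mathlib

section
/- In any transition system that is sort-finite and satisfies bounded nondeterminacy (axiom BN), the finitary preorder coincides with the ω-approximant of bisimulation: ≲^F = ≲_ω. -/
universe u

/-- A labelled transition system with a divergence predicate. -/
structure LTS (Proc : Type u) (Act : Type u) where
  trans : Proc → Act → Proc → Prop
  div : Proc → Prop

namespace LTS

variable {Proc Act : Type u}

def conv (T : LTS Proc Act) (p : Proc) : Prop := ¬ T.div p

def Prebisim (T : LTS Proc Act) (R : Proc → Proc → Prop) : Prop :=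
  ∀ p q, R p q →
    (∀ a p', T.trans p a p' → ∃ q', T.trans q a q' ∧ R p' q') ∧
    (T.conv p → T.conv q ∧
      ∀ a q', T.trans q a q' → ∃ p', T.trans p a p' ∧ R p' q')

def Bisim (T : LTS Proc Act) (p q : Proc) : Prop :=
  ∃ R, T.Prebisim R ∧ R p q

def Fop (T : LTS Proc Act) (R : Proc → Proc → Prop) : Proc → Proc → Prop :=
  fun p q =>
    (∀ a p', T.trans p a p' → ∃ q', T.trans q a q' ∧ R p' q') ∧
    (T.conv p → T.conv q ∧
      ∀ a q', T.trans q a q' → ∃ p', T.trans p a p' ∧ R p' q')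

def approxN (T : LTS Proc Act) : ℕ → Proc → Proc → Prop
  | 0 => fun _ _ => True
  | n + 1 => T.Fop (T.approxN n)

/-- The ω-approximant `≲_ω` of bisimulation. -/
def approxOmega (T : LTS Proc Act) (p q : Proc) : Prop := ∀ n, T.approxN n p q

/-- `sort(p)`. -/
def sortP (T : LTS Proc Act) (p : Proc) : Set Act :=
  {a | ∃ q r, Relation.ReflTransGen (fun x y => ∃ b, T.trans x b y) p q ∧ T.trans q a r}

/-- The capability set `C(p) ⊆ (Act × Proc) ∪ {⊥}` of a process. -/
def capSet (T : LTS Proc Act) (p : Proc) : Set (Option (Act × Proc)) :=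
  {c | (c = none ∧ T.div p) ∨ ∃ a q, c = some (a, q) ∧ T.trans p a q}

end LTS

/-- The two-sorted finitary domain logic `L_ω` for transition systems:
`false` is the process sort `π`, `true` the capability sort `κ`. -/
inductive LFF (Act : Type u) : Bool → Type u
  | tt {b} : LFF Act b
  | ff {b} : LFF Act b
  | and {b} (φ ψ : LFF Act b) : LFF Act b
  | or {b} (φ ψ : LFF Act b) : LFF Act b
  | box (φ : LFF Act true) : LFF Act false
  | dia (φ : LFF Act true) : LFF Act false
  | act (a : Act) (φ : LFF Act false) : LFF Act true

/-- Semantic domain of each sort: processes for `π`, capabilities for `κ`. -/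
def LSort (Proc Act : Type u) : Bool → Type u := fun b =>
  match b with
  | false => Proc
  | true => Option (Act × Proc)

/-- Satisfaction for the two-sorted finitary domain logic. -/
def LFF.sat {Proc Act : Type u} (T : LTS Proc Act) :
    {b : Bool} → LFF Act b → LSort Proc Act b → Prop
  | _, .tt, _ => True
  | _, .ff, _ => False
  | _, .and φ ψ, x => sat T φ x ∧ sat T ψ x
  | _, .or φ ψ, x => sat T φ x ∨ sat T ψ x
  | _, .box φ, p => ∀ c ∈ T.capSet p, sat T φ c
  | _, .dia φ, p => sat T φ none ∨ ∃ c ∈ T.capSet p, sat T φ c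
  | _, .act a φ, c => ∃ q, c = some (a, q) ∧ sat T φ q

/-- The axiom scheme of bounded non-determinacy (BN):
`□⋁_{i∈I} φ_i ≤ ⋁_{J fin ⊆ I} □⋁_{j∈J} φ_j` for finitary formulas `φ_i`. -/
def BN {Proc Act : Type u} (T : LTS Proc Act) : Prop :=
  ∀ (p : Proc) (ι : Type u) (φ : ι → LFF Act true),
    (∀ c ∈ T.capSet p, ∃ i, LFF.sat T (φ i) c) →
    ∃ J : Finset ι, ∀ c ∈ T.capSet p, ∃ i ∈ J, LFF.sat T (φ i) c

/-- Finite synchronisation trees. -/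
inductive FST (Act : Type u) : Type u
  | node (children : List (Act × FST Act)) (d : Bool) : FST Act

/-- The disjoint union of the finite-synchronisation-tree transition system
with a given transition system `T`. -/
def combF {Proc Act : Type u} (T : LTS Proc Act) : LTS (FST Act ⊕ Proc) Act where
  trans := fun x a y =>
    match x, y with
    | .inl (.node cs _), .inl t => (a, t) ∈ cs
    | .inr p, .inr q => T.trans p a q
    | _, _ => False
  div := fun x =>
    match x with
    | .inl (.node _ d) => d = true
    | .inr p => T.div p

/-- The finitary preorder `≲^F`: `p ≲^F q` iff every finite synchronisation tree
below `p` (in the bisimulation preorder) is below `q`. -/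
def FinPre {Proc Act : Type u} (T : LTS Proc Act) (p q : Proc) : Prop :=
  ∀ t : FST Act,
    (combF T).Bisim (.inl t) (.inr p) → (combF T).Bisim (.inl t) (.inr q)

-- ===== auxiliary =====
namespace LTS
variable {Proc Act : Type u}

theorem approxN_refl (T : LTS Proc Act) : ∀ n p, T.approxN n p p := by
  intro n
  induction n with
  | zero => intro p; trivial
  | succ n ih =>
    intro p
    exact ⟨fun a p' h => ⟨p', h, ih p'⟩, fun hc => ⟨hc, fun a q' h => ⟨q', h, ih q'⟩⟩⟩

theorem approxN_trans (T : LTS Proc Act) :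
    ∀ n p q r, T.approxN n p q → T.approxN n q r → T.approxN n p r := by
  intro n
  induction n with
  | zero => intro p q r _ _; trivial
  | succ n ih =>
    rintro p q r ⟨hf1, hb1⟩ ⟨hf2, hb2⟩
    refine ⟨?_, ?_⟩
    · intro a p' h
      obtain ⟨q', h1, h2⟩ := hf1 a p' h
      obtain ⟨r', h3, h4⟩ := hf2 a q' h1
      exact ⟨r', h3, ih _ _ _ h2 h4⟩
    · intro hc
      obtain ⟨hcq, hm1⟩ := hb1 hc
      obtain ⟨hcr, hm2⟩ := hb2 hcq
      refine ⟨hcr, fun a r' h => ?_⟩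
      obtain ⟨q', h1, h2⟩ := hm2 a r' h
      obtain ⟨p', h3, h4⟩ := hm1 a q' h1
      exact ⟨p', h3, ih _ _ _ h4 h2⟩

theorem bisim_prebisim (T : LTS Proc Act) : T.Prebisim T.Bisim := by
  rintro p q ⟨R, hR, hpq⟩
  obtain ⟨hf, hb⟩ := hR p q hpq
  refine ⟨fun a p' h => ?_, fun hc => ?_⟩
  · obtain ⟨q', h1, h2⟩ := hf a p' h
    exact ⟨q', h1, R, hR, h2⟩
  · obtain ⟨h1, h2⟩ := hb hc
    refine ⟨h1, fun a q' h => ?_⟩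
    obtain ⟨p', h3, h4⟩ := h2 a q' h
    exact ⟨p', h3, R, hR, h4⟩

theorem bisim_approxN (T : LTS Proc Act) :
    ∀ n p q, T.Bisim p q → T.approxN n p q := by
  intro n
  induction n with
  | zero => intro p q _; trivial
  | succ n ih =>
    intro p q hb
    obtain ⟨hf, hbk⟩ := T.bisim_prebisim p q hb
    refine ⟨fun a p' h => ?_, fun hc => ?_⟩
    · obtain ⟨q', h1, h2⟩ := hf a p' h
      exact ⟨q', h1, ih _ _ h2⟩
    · obtain ⟨h1, h2⟩ := hbk hc
      refine ⟨h1, fun a q' h => ?_⟩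
      obtain ⟨p', h3, h4⟩ := h2 a q' h
      exact ⟨p', h3, ih _ _ h4⟩
end LTS

theorem approxN_inr {Proc Act : Type u} (T : LTS Proc Act) :
    ∀ n p q, (combF T).approxN n (.inr p) (.inr q) ↔ T.approxN n p q := by
  intro n
  induction n with
  | zero => intro p q; simp [LTS.approxN]
  | succ n ih =>
    intro p q
    constructor
    · rintro ⟨hf, hb⟩
      refine ⟨fun a p' h => ?_, fun hc => ?_⟩
      · obtain ⟨q', h1, h2⟩ := hf a (.inr p') h
        cases q' with
        | inl t => exact False.elim h1
        | inr q' => exact ⟨q', h1, (ih p' q').mp h2⟩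
      · obtain ⟨h1, h2⟩ := hb hc
        refine ⟨h1, fun a q' h => ?_⟩
        obtain ⟨p', h3, h4⟩ := h2 a (.inr q') h
        cases p' with
        | inl t => exact False.elim h3
        | inr p' => exact ⟨p', h3, (ih p' q').mp h4⟩
    · rintro ⟨hf, hb⟩
      refine ⟨fun a p' h => ?_, fun hc => ?_⟩
      · cases p' with
        | inl t => exact False.elim h
        | inr p' =>
          obtain ⟨q', h1, h2⟩ := hf a p' h
          exact ⟨.inr q', h1, (ih p' q').mpr h2⟩
      · obtain ⟨h1, h2⟩ := hb hc
        refine ⟨h1, fun a q' h => ?_⟩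
        cases q' with
        | inl t => exact False.elim h
        | inr q' =>
          obtain ⟨p', h3, h4⟩ := h2 a q' h
          exact ⟨.inr p', h3, (ih p' q').mpr h4⟩

inductive HtLe {Act : Type u} : FST Act → ℕ → Prop
  | mk (cs : List (Act × FST Act)) (d : Bool) (n : ℕ) :
      (∀ p ∈ cs, HtLe p.2 n) → HtLe (.node cs d) (n + 1)

theorem htle_mono {Act : Type u} {t : FST Act} {n m : ℕ} (h : HtLe t n) (hnm : n ≤ m) :
    HtLe t m := by
  induction h generalizing m with
  | mk cs d k hch ih =>
    obtain ⟨m, rfl⟩ : ∃ m', m = m' + 1 := ⟨m - 1, by omega⟩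
    exact HtLe.mk cs d m (fun p hp => ih p hp (by omega))

theorem htle_bound {Act : Type u} :
    ∀ cs : List (Act × FST Act), (∀ p ∈ cs, ∃ n, HtLe p.2 n) →
      ∃ N, ∀ p ∈ cs, HtLe p.2 N := by
  intro cs
  induction cs with
  | nil => exact fun _ => ⟨0, by simp⟩
  | cons c cs ihc =>
    intro h
    obtain ⟨N, hN⟩ := ihc (fun p hp => h p (List.mem_cons_of_mem c hp))
    obtain ⟨M, hM⟩ := h c List.mem_cons_self
    refine ⟨max N M, ?_⟩
    intro p hp
    rcases List.mem_cons.mp hp with rfl | hp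
    · exact htle_mono hM (le_max_right N M)
    · exact htle_mono (hN p hp) (le_max_left N M)

theorem exists_htLe {Act : Type u} : ∀ t : FST Act, ∃ n, HtLe t n
  | .node cs d => by
    have ih : ∀ p ∈ cs, ∃ n, HtLe p.2 n := by
      intro p hp
      have hlt : sizeOf p.2 < sizeOf (FST.node cs d) := by
        have h1 := List.sizeOf_lt_of_mem hp
        obtain ⟨a, t'⟩ := p
        simp only [FST.node.sizeOf_spec, Prod.mk.sizeOf_spec] at h1 ⊢
        omega
      exact exists_htLe p.2
    obtain ⟨N, hN⟩ := htle_bound cs ih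
    exact ⟨N + 1, HtLe.mk cs d N hN⟩
termination_by t => sizeOf t
decreasing_by exact hlt

theorem htle_bisim {Proc Act : Type u} (T : LTS Proc Act) {t : FST Act} {x : FST Act ⊕ Proc}
    (h : ∃ n, HtLe t n ∧ (combF T).approxN n (.inl t) x) :
    (combF T).Bisim (.inl t) x := by
  refine ⟨fun y z => ∃ t' n, y = Sum.inl t' ∧ HtLe t' n ∧ (combF T).approxN n y z,
    ?_, t, h.choose, rfl, h.choose_spec⟩
  rintro y z ⟨t', n, rfl, hht, hap⟩
  cases hht with
  | mk cs d m hch =>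
    obtain ⟨hf, hb⟩ := hap
    refine ⟨?_, ?_⟩
    · intro a y' htr
      cases y' with
      | inr p => exact False.elim htr
      | inl t'' =>
        obtain ⟨z', hz, hap'⟩ := hf a (.inl t'') htr
        exact ⟨z', hz, t'', m, rfl, hch (a, t'') htr, hap'⟩
    · intro hc
      obtain ⟨hcz, hmb⟩ := hb hc
      refine ⟨hcz, fun a z' hz => ?_⟩
      obtain ⟨p', hp, ha⟩ := hmb a z' hz
      cases p' with
      | inr p => exact False.elim hp
      | inl t'' => exact ⟨.inl t'', hp, t'', m, rfl, hch (a, t'') hp, ha⟩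

def Reach {Proc Act : Type u} (T : LTS Proc Act) (p q : Proc) : Prop :=
  Relation.ReflTransGen (fun x y => ∃ b, T.trans x b y) p q

theorem reach_step {Proc Act : Type u} {T : LTS Proc Act} {r x x' : Proc} {a : Act}
    (hx : Reach T r x) (h : T.trans x a x') : Reach T r x' :=
  hx.tail ⟨a, h⟩

theorem classes {Proc Act : Type u} (T : LTS Proc Act)
    (hsort : ∀ p, (T.sortP p).Finite) (r : Proc) :
    ∀ n : ℕ, ∃ V : Set Proc, V.Finite ∧ ∀ x, Reach T r x →
      ∃ v ∈ V, Reach T r v ∧ T.approxN n x v ∧ T.approxN n v x := by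
  intro n
  induction n with
  | zero =>
    exact ⟨{r}, Set.finite_singleton r, fun x hx =>
      ⟨r, rfl, Relation.ReflTransGen.refl, trivial, trivial⟩⟩
  | succ n ih =>
    obtain ⟨V, hVfin, hV⟩ := ih
    classical
    set σ : Proc → Bool × Set (Act × Proc) := fun x =>
      ((if T.div x then true else false),
       {av | av.2 ∈ V ∧ ∃ x', T.trans x av.1 x' ∧
          T.approxN n x' av.2 ∧ T.approxN n av.2 x'}) with hσ
    have key : ∀ x y, Reach T r x → Reach T r y → σ x = σ y → T.approxN (n+1) x y := by
      intro x y hx hy he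
      have he1 : (if T.div x then true else false) = (if T.div y then true else false) :=
        congrArg Prod.fst he
      have hdiv : T.div x ↔ T.div y := by
        by_cases h1 : T.div x <;> by_cases h2 : T.div y <;> simp [h1, h2] at he1 ⊢
      refine ⟨?_, ?_⟩
      · intro a x' hx'
        obtain ⟨v, hvV, hvR, h1, h2⟩ := hV x' (reach_step hx hx')
        have hmem : (a, v) ∈ (σ x).2 := ⟨hvV, x', hx', h1, h2⟩
        rw [he] at hmem
        obtain ⟨_, y', hy', k1, k2⟩ := hmem
        exact ⟨y', hy', T.approxN_trans n _ _ _ h1 k2⟩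
      · intro hc
        refine ⟨fun hdy => hc (hdiv.mpr hdy), ?_⟩
        intro a y' hy'
        obtain ⟨v, hvV, hvR, h1, h2⟩ := hV y' (reach_step hy hy')
        have hmem : (a, v) ∈ (σ y).2 := ⟨hvV, y', hy', h1, h2⟩
        rw [← he] at hmem
        obtain ⟨_, x', hx', k1, k2⟩ := hmem
        exact ⟨x', hx', T.approxN_trans n _ _ _ k1 h2⟩
    have hfin : (σ '' {x | Reach T r x}).Finite := by
      apply Set.Finite.subset (Set.Finite.prod (Set.finite_univ)
        ((Set.Finite.prod (hsort r) hVfin).finite_subsets))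
      rintro _ ⟨x, hx, rfl⟩
      refine ⟨Set.mem_univ _, ?_⟩
      rintro ⟨a, v⟩ ⟨hvV, x', hx', _⟩
      exact ⟨⟨x, x', hx, hx'⟩, hvV⟩
    set pick : Bool × Set (Act × Proc) → Proc := fun i =>
      if h : ∃ x, Reach T r x ∧ σ x = i then h.choose else r with hpickdef
    refine ⟨pick '' (σ '' {x | Reach T r x}), hfin.image pick, ?_⟩
    intro x hx
    have hex : ∃ y, Reach T r y ∧ σ y = σ x := ⟨x, hx, rfl⟩
    have hpick : pick (σ x) = hex.choose := dif_pos hex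
    have hp : Reach T r (pick (σ x)) ∧ σ (pick (σ x)) = σ x := by
      rw [hpick]; exact hex.choose_spec
    exact ⟨pick (σ x), ⟨σ x, ⟨x, hx, rfl⟩, rfl⟩, hp.1,
      key x _ hx hp.1 hp.2.symm, key _ x hp.1 hx hp.2⟩

theorem construct {Proc Act : Type u} (T : LTS Proc Act)
    (hsort : ∀ p, (T.sortP p).Finite) :
    ∀ (n : ℕ) (r : Proc), ∃ u : FST Act,
      (combF T).approxN n (.inr r) (.inl u) ∧
      ∀ x, (combF T).approxN n (.inr r) x → (combF T).Bisim (.inl u) x := by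
  intro n
  induction n with
  | zero =>
    intro r
    refine ⟨.node [] true, trivial, ?_⟩
    intro x _
    refine ⟨fun y z => y = Sum.inl (FST.node ([] : List (Act × FST Act)) true), ?_, rfl⟩
    rintro y z rfl
    refine ⟨?_, ?_⟩
    · intro a y' htr
      cases y' with
      | inl t => exact absurd htr List.not_mem_nil
      | inr p => exact False.elim htr
    · intro hc
      exact absurd rfl hc
  | succ n ih =>
    intro r
    classical
    choose U hU1 hU2 using ih
    obtain ⟨V, hVfin, hV⟩ := classes T hsort r n
    set K : Set (Act × Proc) := {k | k.2 ∈ V ∧ ∃ x', T.trans r k.1 x' ∧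
        T.approxN n x' k.2 ∧ T.approxN n k.2 x'} with hKdef
    have hKfin : K.Finite := by
      apply Set.Finite.subset ((hsort r).prod hVfin)
      rintro ⟨a, v⟩ ⟨hvV, x', hx', _⟩
      exact ⟨⟨r, x', Relation.ReflTransGen.refl, hx'⟩, hvV⟩
    set w : Act × Proc → Proc := fun k =>
      if h : ∃ x', T.trans r k.1 x' ∧ T.approxN n x' k.2 ∧ T.approxN n k.2 x'
      then h.choose else r with hwdef
    have hw : ∀ k ∈ K, T.trans r k.1 (w k) ∧ T.approxN n (w k) k.2 ∧
        T.approxN n k.2 (w k) := by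
      rintro k ⟨hkV, hex⟩
      have hwk : w k = hex.choose := dif_pos hex
      rw [hwk]
      exact hex.choose_spec
    set cs : List (Act × FST Act) := hKfin.toFinset.toList.map (fun k => (k.1, U (w k)))
      with hcsdef
    have hcs_mem : ∀ {a : Act} {t : FST Act}, (a, t) ∈ cs ↔
        ∃ k ∈ K, k.1 = a ∧ U (w k) = t := by
      intro a t
      simp only [hcsdef, List.mem_map, Finset.mem_toList, Set.Finite.mem_toFinset,
        Prod.mk.injEq]
      try tauto
    set db : Bool := if T.div r then true else false with hdbdef
    refine ⟨.node cs db, ⟨?_, ?_⟩, ?_⟩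
    · -- forward of (i)
      intro a y htr
      cases y with
      | inl t => exact False.elim htr
      | inr x' =>
        obtain ⟨v, hvV, hvR, h1, h2⟩ := hV x' (Relation.ReflTransGen.single ⟨a, htr⟩)
        have hk : (a, v) ∈ K := ⟨hvV, x', htr, h1, h2⟩
        have hwk := hw _ hk
        refine ⟨.inl (U (w (a, v))), hcs_mem.mpr ⟨(a, v), hk, rfl, rfl⟩, ?_⟩
        have t1 : T.approxN n x' (w (a, v)) := T.approxN_trans n _ _ _ h1 hwk.2.2
        exact (combF T).approxN_trans n _ _ _ ((approxN_inr T n _ _).mpr t1) (hU1 (w (a, v)))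
    · -- backward of (i)
      intro hc
      have hdr : ¬ T.div r := hc
      refine ⟨?_, ?_⟩
      · intro hd
        rw [hdbdef, if_neg hdr] at hd
        exact Bool.false_ne_true hd
      · intro a y htr
        cases y with
        | inr p => exact False.elim htr
        | inl t =>
          obtain ⟨k, hk, hka, hkt⟩ := hcs_mem.mp htr
          have hwk := hw _ hk
          refine ⟨.inr (w k), ?_, ?_⟩
          · show T.trans r a (w k)
            rw [← hka]; exact hwk.1
          · rw [← hkt]; exact hU1 (w k)
    · -- (ii)
      intro x hx
      refine ⟨fun y z => (combF T).Bisim y z ∨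
        (y = Sum.inl (FST.node cs db) ∧ (combF T).approxN (n+1) (Sum.inr r) z), ?_,
        Or.inr ⟨rfl, hx⟩⟩
      rintro y z (hb | ⟨rfl, hz⟩)
      · obtain ⟨hf, hbk⟩ := (combF T).bisim_prebisim y z hb
        refine ⟨fun a p' h => ?_, fun hcv => ?_⟩
        · obtain ⟨q', h1, h2⟩ := hf a p' h
          exact ⟨q', h1, Or.inl h2⟩
        · obtain ⟨h1, h2⟩ := hbk hcv
          refine ⟨h1, fun a q' h => ?_⟩
          obtain ⟨p', h3, h4⟩ := h2 a q' h
          exact ⟨p', h3, Or.inl h4⟩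
      · obtain ⟨hf, hbk⟩ := hz
        refine ⟨?_, ?_⟩
        · intro a y' htr
          cases y' with
          | inr p => exact False.elim htr
          | inl t =>
            obtain ⟨k, hk, hka, hkt⟩ := hcs_mem.mp htr
            subst hka
            obtain ⟨x'', htr'', h1, h2⟩ := hk.2
            obtain ⟨z', hz', hap⟩ := hf k.1 (.inr x'') htr''
            have hwk := hw _ hk
            have t1 : T.approxN n (w k) x'' := T.approxN_trans n _ _ _ hwk.2.1 h2
            have t2 : (combF T).approxN n (.inr (w k)) z' :=
              (combF T).approxN_trans n _ _ _ ((approxN_inr T n _ _).mpr t1) hap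
            refine ⟨z', hz', Or.inl ?_⟩
            rw [← hkt]
            exact hU2 (w k) z' t2
        · intro hcu
          have hdr : ¬ T.div r := fun h => hcu (show db = true by rw [hdbdef, if_pos h])
          obtain ⟨hcz, hmb⟩ := hbk hdr
          refine ⟨hcz, ?_⟩
          intro a z' hz'
          obtain ⟨p', hp, hap⟩ := hmb a z' hz'
          cases p' with
          | inl t => exact False.elim hp
          | inr x' =>
            obtain ⟨v, hvV, hvR, h1, h2⟩ := hV x' (Relation.ReflTransGen.single ⟨a, hp⟩)
            have hk : (a, v) ∈ K := ⟨hvV, x', hp, h1, h2⟩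
            have hwk := hw _ hk
            refine ⟨.inl (U (w (a, v))), hcs_mem.mpr ⟨(a, v), hk, rfl, rfl⟩, Or.inl ?_⟩
            apply hU2
            have t1 : T.approxN n (w (a, v)) x' := T.approxN_trans n _ _ _ hwk.2.1 h2
            exact (combF T).approxN_trans n _ _ _ ((approxN_inr T n _ _).mpr t1) hap

theorem finpre_aux {Proc Act : Type u} (T : LTS Proc Act)
    (hsort : ∀ p, (T.sortP p).Finite) :
    ∀ p q, FinPre T p q ↔ T.approxOmega p q := by
  intro p q
  constructor
  · intro h n
    obtain ⟨u, hu1, hu2⟩ := construct T hsort n p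
    have hb : (combF T).Bisim (.inl u) (.inr p) := hu2 (.inr p) ((combF T).approxN_refl n _)
    have hbq := h u hb
    exact (approxN_inr T n p q).mp ((combF T).approxN_trans n _ _ _ hu1
      ((combF T).bisim_approxN n _ _ hbq))
  · intro h t hb
    obtain ⟨m, hm⟩ := exists_htLe t
    exact htle_bisim T ⟨m, hm, (combF T).approxN_trans m _ _ _
      ((combF T).bisim_approxN m _ _ hb) ((approxN_inr T m p q).mpr (h m))⟩

/-- In any sort-finite transition system satisfying bounded non-determinacy,
the finitary preorder coincides with the ω-approximant of bisimulation:
`≲^F = ≲_ω`. -/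
theorem finpre_eq_approx_omega {Proc Act : Type u} (T : LTS Proc Act)
    (hsort : ∀ p, (T.sortP p).Finite) (hBN : BN T) :
    ∀ p q, FinPre T p q ↔ T.approxOmega p q := by
  exact finpre_aux T hsort
end

section
/- In any finitary transition system (one satisfying bounded nondeterminacy (BN) and finite approximability (FA)), for all processes p, q: L_∞(p) ⊆ L_∞(q) iff L_ω(p) ⊆ L_ω(q). Consequently ≲^B = ≲_ω = ≲^F and all coincide with inclusion of finitary theories. -/
universe u

inductive LFI (Act : Type u) : Bool → Type (u + 1)
  | conj {b} {ι : Type u} (f : ι → LFI Act b) : LFI Act b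
  | disj {b} {ι : Type u} (f : ι → LFI Act b) : LFI Act b
  | box (φ : LFI Act true) : LFI Act false
  | dia (φ : LFI Act true) : LFI Act false
  | act (a : Act) (φ : LFI Act false) : LFI Act true

/-- Satisfaction for the two-sorted infinitary domain logic. -/
def LFI.sat {Proc Act : Type u} (T : LTS Proc Act) :
    {b : Bool} → LFI Act b → LSort Proc Act b → Prop
  | _, .conj f, x => ∀ i, sat T (f i) x
  | _, .disj f, x => ∃ i, sat T (f i) x
  | _, .box φ, p => ∀ c ∈ T.capSet p, sat T φ c
  | _, .dia φ, p => sat T φ none ∨ ∃ c ∈ T.capSet p, sat T φ c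
  | _, .act a φ, c => ∃ q, c = some (a, q) ∧ sat T φ q

/-- The axiom scheme of finite approximability (FA):
`⋀_{J fin ⊆ I} ◇⋀_{j∈J} φ_j ≤ ◇⋀_{i∈I} φ_i` for finitary formulas `φ_i`. -/
def FA {Proc Act : Type u} (T : LTS Proc Act) : Prop :=
  ∀ (p : Proc) (ι : Type u) (φ : ι → LFF Act true),
    (∀ J : Finset ι,
      (∀ i ∈ J, LFF.sat T (φ i) none) ∨
        ∃ c ∈ T.capSet p, ∀ i ∈ J, LFF.sat T (φ i) c) →
    ((∀ i, LFF.sat T (φ i) none) ∨ ∃ c ∈ T.capSet p, ∀ i, LFF.sat T (φ i) c)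

section Dev
variable {Proc Act : Type u}

open LFF

/-- Finite conjunction of a list of formulas. -/
def conjList : List (LFF Act b) → LFF Act b
  | [] => .tt
  | φ :: l => .and φ (conjList l)

def disjList : List (LFF Act b) → LFF Act b
  | [] => .ff
  | φ :: l => .or φ (disjList l)

theorem sat_conjList (T : LTS Proc Act) (l : List (LFF Act b)) (x : LSort Proc Act b) :
    LFF.sat T (conjList l) x ↔ ∀ φ ∈ l, LFF.sat T φ x := by
  induction l with
  | nil => simp [conjList, LFF.sat]
  | cons φ l ih => simp [conjList, LFF.sat, ih]

theorem sat_disjList (T : LTS Proc Act) (l : List (LFF Act b)) (x : LSort Proc Act b) :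
    LFF.sat T (disjList l) x ↔ ∃ φ ∈ l, LFF.sat T φ x := by
  induction l with
  | nil => simp [disjList, LFF.sat]
  | cons φ l ih => simp [disjList, LFF.sat, ih]

/-- Monotonicity: a capability formula true at `⊥` is true everywhere. -/
theorem mono_none (T : LTS Proc Act) :
    ∀ (ψ : LFF Act true) (c : Option (Act × Proc)),
      LFF.sat T ψ none → LFF.sat T ψ c
  | .tt, _, _ => trivial
  | .ff, _, h => h.elim
  | .and φ ψ, c, h => ⟨mono_none T φ c h.1, mono_none T ψ c h.2⟩
  | .or φ ψ, c, h => h.elim (fun h => Or.inl (mono_none T φ c h))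
      (fun h => Or.inr (mono_none T ψ c h))
  | .act a φ, c, h => by
      obtain ⟨q, hq, -⟩ := h; exact absurd hq (by simp)

/-- The statement of preservation of finitary formulas along a relation. -/
def PresStmt (T : LTS Proc Act) (R : Proc → Proc → Prop) :
    ∀ {b : Bool}, LFF Act b → Prop
  | false, φ => ∀ p q, R p q → LFF.sat T φ p → LFF.sat T φ q
  | true, ψ => ∀ (a : Act) p q, R p q →
      LFF.sat T ψ (some (a, p)) → LFF.sat T ψ (some (a, q))

theorem pres_of_prebisim (T : LTS Proc Act) {R} (hR : T.Prebisim R) :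
    ∀ (b : Bool) (φ : LFF Act b), PresStmt T R φ
  | false, .tt => fun _ _ _ _ => trivial
  | true, .tt => fun _ _ _ _ _ => trivial
  | false, .ff => fun _ _ _ h => h.elim
  | true, .ff => fun _ _ _ _ h => h.elim
  | false, .and φ ψ => fun p q hr h =>
      ⟨pres_of_prebisim T hR false φ p q hr h.1, pres_of_prebisim T hR false ψ p q hr h.2⟩
  | true, .and φ ψ => fun a p q hr h =>
      ⟨pres_of_prebisim T hR true φ a p q hr h.1, pres_of_prebisim T hR true ψ a p q hr h.2⟩
  | false, .or φ ψ => fun p q hr h =>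
      h.elim (fun h => Or.inl (pres_of_prebisim T hR false φ p q hr h))
        (fun h => Or.inr (pres_of_prebisim T hR false ψ p q hr h))
  | true, .or φ ψ => fun a p q hr h =>
      h.elim (fun h => Or.inl (pres_of_prebisim T hR true φ a p q hr h))
        (fun h => Or.inr (pres_of_prebisim T hR true ψ a p q hr h))
  | false, .box ψ => by
      have ih := pres_of_prebisim T hR true ψ
      intro p q hr h
      intro c hc
      rcases hc with ⟨rfl, hdq⟩ | ⟨a, q', rfl, htr⟩
      · -- c = none, q divergent
        by_cases hdp : T.div p
        · exact h none (Or.inl ⟨rfl, hdp⟩)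
        · exact absurd ((hR p q hr).2 hdp).1 (not_not.2 hdq)
      · by_cases hdp : T.div p
        · exact mono_none T ψ _ (h none (Or.inl ⟨rfl, hdp⟩))
        · obtain ⟨_, hback⟩ := (hR p q hr).2 hdp
          obtain ⟨p', htp, hr'⟩ := hback a q' htr
          exact ih a p' q' hr' (h (some (a, p')) (Or.inr ⟨a, p', rfl, htp⟩))
  | false, .dia ψ => by
      have ih := pres_of_prebisim T hR true ψ
      intro p q hr h
      rcases h with h | ⟨c, hc, hsat⟩
      · exact Or.inl h
      rcases hc with ⟨rfl, _⟩ | ⟨a, p', rfl, htp⟩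
      · exact Or.inl hsat
      · obtain ⟨q', htq, hr'⟩ := (hR p q hr).1 a p' htp
        exact Or.inr ⟨some (a, q'), Or.inr ⟨a, q', rfl, htq⟩, ih a p' q' hr' hsat⟩
  | true, .act a φ => by
      have ih := pres_of_prebisim T hR false φ
      intro a' p q hr h
      obtain ⟨r, hr1, hsat⟩ := h
      injection hr1 with h'
      injection h' with h1 h2
      subst h1; subst h2
      exact ⟨q, rfl, ih _ q hr hsat⟩

theorem bisim_pres (T : LTS Proc Act) {p q} (h : T.Bisim p q)
    (φ : LFF Act false) : LFF.sat T φ p → LFF.sat T φ q := by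
  obtain ⟨R, hR, hpq⟩ := h
  exact pres_of_prebisim T hR false φ p q hpq

end Dev
section Dev2
variable {Proc Act : Type u}

theorem fop_mono (T : LTS Proc Act) {R S : Proc → Proc → Prop}
    (h : ∀ p q, R p q → S p q) : ∀ p q, T.Fop R p q → T.Fop S p q := by
  intro p q ⟨h1, h2⟩
  refine ⟨fun a p' ht => ?_, fun hc => ?_⟩
  · obtain ⟨q', hq', hr⟩ := h1 a p' ht; exact ⟨q', hq', h p' q' hr⟩
  · obtain ⟨hcq, hb⟩ := h2 hc
    exact ⟨hcq, fun a q' ht => by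
      obtain ⟨p', hp', hr⟩ := hb a q' ht; exact ⟨p', hp', h p' q' hr⟩⟩

theorem approxN_succ_le (T : LTS Proc Act) :
    ∀ n p q, T.approxN (n + 1) p q → T.approxN n p q := by
  intro n
  induction n with
  | zero => intro p q _; trivial
  | succ n ih => intro p q h; exact fop_mono T ih p q h

theorem approxN_anti (T : LTS Proc Act) {m n : ℕ} (h : m ≤ n) :
    ∀ p q, T.approxN n p q → T.approxN m p q := by
  induction h with
  | refl => exact fun p q h => h
  | step h ih => exact fun p q hh => ih p q (approxN_succ_le T _ p q hh)

/-- Modal depth of a finitary formula. -/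
def LFF.depth : ∀ {b : Bool}, LFF Act b → ℕ
  | _, .tt => 0
  | _, .ff => 0
  | _, .and φ ψ => max φ.depth ψ.depth
  | _, .or φ ψ => max φ.depth ψ.depth
  | _, .box ψ => ψ.depth + 1
  | _, .dia ψ => ψ.depth + 1
  | _, .act _ φ => φ.depth

/-- Preservation along `approxN (depth φ)`. -/
def PresN (T : LTS Proc Act) : ∀ {b : Bool}, LFF Act b → Prop
  | false, φ => ∀ n, φ.depth ≤ n → ∀ p q, T.approxN n p q →
      LFF.sat T φ p → LFF.sat T φ q
  | true, ψ => ∀ n, ψ.depth ≤ n → ∀ (a : Act) p q, T.approxN n p q →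
      LFF.sat T ψ (some (a, p)) → LFF.sat T ψ (some (a, q))

theorem presN_all (T : LTS Proc Act) :
    ∀ (b : Bool) (φ : LFF Act b), PresN T φ
  | false, .tt => fun _ _ _ _ _ _ => trivial
  | true, .tt => fun _ _ _ _ _ _ _ => trivial
  | false, .ff => fun _ _ _ _ _ h => h.elim
  | true, .ff => fun _ _ _ _ _ _ h => h.elim
  | false, .and φ ψ => fun n hn p q hr h =>
      ⟨presN_all T false φ n (le_trans (le_max_left _ _) hn) p q hr h.1,
       presN_all T false ψ n (le_trans (le_max_right _ _) hn) p q hr h.2⟩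
  | true, .and φ ψ => fun n hn a p q hr h =>
      ⟨presN_all T true φ n (le_trans (le_max_left _ _) hn) a p q hr h.1,
       presN_all T true ψ n (le_trans (le_max_right _ _) hn) a p q hr h.2⟩
  | false, .or φ ψ => fun n hn p q hr h =>
      h.elim (fun h => Or.inl (presN_all T false φ n (le_trans (le_max_left _ _) hn) p q hr h))
        (fun h => Or.inr (presN_all T false ψ n (le_trans (le_max_right _ _) hn) p q hr h))
  | true, .or φ ψ => fun n hn a p q hr h =>
      h.elim (fun h => Or.inl (presN_all T true φ n (le_trans (le_max_left _ _) hn) a p q hr h))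
        (fun h => Or.inr (presN_all T true ψ n (le_trans (le_max_right _ _) hn) a p q hr h))
  | false, .box ψ => by
      have ih := presN_all T true ψ
      intro n hn p q hr h
      have hr' : T.approxN (ψ.depth + 1) p q := approxN_anti T hn p q hr
      intro c hc
      rcases hc with ⟨rfl, hdq⟩ | ⟨a, q', rfl, htr⟩
      · by_cases hdp : T.div p
        · exact h none (Or.inl ⟨rfl, hdp⟩)
        · exact absurd (hr'.2 hdp).1 (not_not.2 hdq)
      · by_cases hdp : T.div p
        · exact mono_none T ψ _ (h none (Or.inl ⟨rfl, hdp⟩))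
        · obtain ⟨_, hback⟩ := hr'.2 hdp
          obtain ⟨p', htp, hra⟩ := hback a q' htr
          exact ih ψ.depth le_rfl a p' q' hra (h (some (a, p')) (Or.inr ⟨a, p', rfl, htp⟩))
  | false, .dia ψ => by
      have ih := presN_all T true ψ
      intro n hn p q hr h
      have hr' : T.approxN (ψ.depth + 1) p q := approxN_anti T hn p q hr
      rcases h with h | ⟨c, hc, hsat⟩
      · exact Or.inl h
      rcases hc with ⟨rfl, _⟩ | ⟨a, p', rfl, htp⟩
      · exact Or.inl hsat
      · obtain ⟨q', htq, hra⟩ := hr'.1 a p' htp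
        exact Or.inr ⟨some (a, q'), Or.inr ⟨a, q', rfl, htq⟩, ih ψ.depth le_rfl a p' q' hra hsat⟩
  | true, .act a φ => by
      have ih := presN_all T false φ
      intro n hn a' p q hr h
      obtain ⟨r, hr1, hsat⟩ := h
      injection hr1 with h'
      injection h' with h1 h2
      subst h1; subst h2
      exact ⟨q, rfl, ih n hn _ q hr hsat⟩

/-- Preservation of finitary formulas along `≲_ω`. -/
theorem omega_pres (T : LTS Proc Act) {p q} (h : T.approxOmega p q)
    (φ : LFF Act false) : LFF.sat T φ p → LFF.sat T φ q :=
  presN_all T false φ φ.depth le_rfl p q (h φ.depth)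

theorem bisim_to_omega (T : LTS Proc Act) {p q} (h : T.Bisim p q) :
    T.approxOmega p q := by
  obtain ⟨R, hR, hpq⟩ := h
  intro n
  induction n generalizing p q with
  | zero => trivial
  | succ n ih =>
    refine ⟨fun a p' ht => ?_, fun hc => ?_⟩
    · obtain ⟨q', hq', hr⟩ := (hR p q hpq).1 a p' ht
      exact ⟨q', hq', ih hr⟩
    · obtain ⟨hcq, hb⟩ := (hR p q hpq).2 hc
      exact ⟨hcq, fun a q' ht => by
        obtain ⟨p', hp', hr⟩ := hb a q' ht; exact ⟨p', hp', ih hr⟩⟩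

end Dev2
section Dev3
variable {Proc Act : Type u} {T : LTS Proc Act}

open Classical

/-- BN-based covering: a box formula over a finite disjunction of capabilities of `p`. -/
theorem box_cover (hBN : BN T) {p : Proc} (hc : T.conv p)
    (g : ∀ b p'', T.trans p b p'' → LFF Act false)
    (hg : ∀ b p'' h, LFF.sat T (g b p'' h) p'') :
    ∃ l : List (LFF Act true),
      (∀ ψ ∈ l, ∃ b p'' h, ψ = LFF.act b (g b p'' h)) ∧
      LFF.sat T (.box (disjList l)) p := by
  classical
  set ι := {x : Act × Proc // T.trans p x.1 x.2} with hι
  have hcov : ∀ c ∈ T.capSet p, ∃ i : ι,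
      LFF.sat T (LFF.act i.1.1 (g i.1.1 i.1.2 i.2)) c := by
    rintro c (⟨rfl, hd⟩ | ⟨b, r, rfl, ht⟩)
    · exact absurd hd hc
    · exact ⟨⟨(b, r), ht⟩, ⟨r, rfl, hg b r ht⟩⟩
  obtain ⟨J, hJ⟩ := hBN p ι (fun i => LFF.act i.1.1 (g i.1.1 i.1.2 i.2)) hcov
  refine ⟨J.toList.map (fun i => LFF.act i.1.1 (g i.1.1 i.1.2 i.2)), ?_, ?_⟩
  · intro ψ hψ
    simp only [List.mem_map] at hψ
    obtain ⟨i, _, rfl⟩ := hψ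
    exact ⟨i.1.1, i.1.2, i.2, rfl⟩
  · intro c hcap
    obtain ⟨i, hiJ, hsat⟩ := hJ c hcap
    erw [sat_disjList]
    exact ⟨_, List.mem_map.2 ⟨i, Finset.mem_toList.2 hiJ, rfl⟩, hsat⟩

/-- Separation when `p` converges but `q` diverges. -/
theorem sep2a (hBN : BN T) {p q : Proc} (hcp : T.conv p) (hdq : T.div q) :
    ∃ φ : LFF Act false, LFF.sat T φ p ∧ ¬ LFF.sat T φ q := by
  obtain ⟨l, hl, hsat⟩ := box_cover hBN hcp (fun _ _ _ => LFF.tt) (fun _ _ _ => trivial)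
  refine ⟨.box (disjList l), hsat, fun h => ?_⟩
  have := h none (Or.inl ⟨rfl, hdq⟩)
  erw [sat_disjList] at this
  obtain ⟨ψ, hψ, hsψ⟩ := this
  obtain ⟨b, p'', h', rfl⟩ := hl ψ hψ
  obtain ⟨r, hr, -⟩ := hsψ
  exact absurd hr (by simp)

/-- Separation when `q` has a transition none of whose `p`-matches work. -/
theorem sep2b (hBN : BN T) {p q : Proc} {a : Act} {q' : Proc}
    (hcp : T.conv p) (htq : T.trans q a q')
    (χ : ∀ p'', T.trans p a p'' → LFF Act false)
    (hχ : ∀ p'' h, LFF.sat T (χ p'' h) p'' ∧ ¬ LFF.sat T (χ p'' h) q') :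
    ∃ φ : LFF Act false, LFF.sat T φ p ∧ ¬ LFF.sat T φ q := by
  classical
  have hg : ∀ b p'' (h : T.trans p b p''),
      LFF.sat T (if hb : b = a then χ p'' (hb ▸ h) else LFF.tt) p'' := by
    intro b p'' h
    by_cases hb : b = a
    · rw [dif_pos hb]; exact (hχ p'' _).1
    · rw [dif_neg hb]; trivial
  obtain ⟨l, hl, hsat⟩ := box_cover hBN hcp
    (fun b p'' h => if hb : b = a then χ p'' (hb ▸ h) else LFF.tt) hg
  refine ⟨.box (disjList l), hsat, fun h => ?_⟩
  have := h (some (a, q')) (Or.inr ⟨a, q', rfl, htq⟩)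
  erw [sat_disjList] at this
  obtain ⟨ψ, hψ, hsψ⟩ := this
  obtain ⟨b, p'', h', rfl⟩ := hl ψ hψ
  obtain ⟨r, hr, hsr⟩ := hsψ
  injection hr with hr'
  injection hr' with h1 h2
  subst h1; subst h2
  rw [dif_pos rfl] at hsr
  exact (hχ p'' h').2 hsr

/-- Separation when `p` has a transition that `q` cannot match (uses FA). -/
theorem sep1 (hFA : FA T) {p q : Proc} {a : Act} {p' : Proc}
    (htp : T.trans p a p')
    (χ : ∀ q', T.trans q a q' → LFF Act false)
    (hχ : ∀ q' h, LFF.sat T (χ q' h) p' ∧ ¬ LFF.sat T (χ q' h) q') :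
    ∃ φ : LFF Act false, LFF.sat T φ p ∧ ¬ LFF.sat T φ q := by
  classical
  by_cases hex : ∃ q', T.trans q a q'
  · set ι := {r : Proc // T.trans q a r} with hι
    set f : ι → LFF Act true := fun i => LFF.act a (χ i.1 i.2) with hf
    obtain ⟨i0⟩ : Nonempty ι := ⟨⟨hex.choose, hex.choose_spec⟩⟩
    have hnc : ¬ ((∀ i, LFF.sat T (f i) none) ∨
        ∃ c ∈ T.capSet q, ∀ i, LFF.sat T (f i) c) := by
      rintro (hall | ⟨c, hc, hall⟩)
      · obtain ⟨r, hr, -⟩ := hall i0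
        exact absurd hr (by simp)
      · rcases hc with ⟨rfl, -⟩ | ⟨b, r, rfl, htr⟩
        · obtain ⟨r, hr, -⟩ := hall i0
          exact absurd hr (by simp)
        · obtain ⟨r', hr', -⟩ := hall i0
          injection hr' with h'
          injection h' with h1 h2
          subst h1
          obtain ⟨r'', hr'', hsr⟩ := hall ⟨r, htr⟩
          injection hr'' with h'
          injection h' with h1 h2
          subst h2
          exact (hχ r htr).2 hsr
    have hnh := mt (hFA q ι f) hnc
    push_neg at hnh
    obtain ⟨J, hJ1, hJ2⟩ := hnh
    obtain ⟨i1, hi1, -⟩ := hJ1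
    refine ⟨.dia (.act a (conjList (J.toList.map (fun i => χ i.1 i.2)))), ?_, ?_⟩
    · refine Or.inr ⟨some (a, p'), Or.inr ⟨a, p', rfl, htp⟩, p', rfl, ?_⟩
      erw [sat_conjList]
      intro ψ hψ
      simp only [List.mem_map] at hψ
      obtain ⟨i, -, rfl⟩ := hψ
      exact (hχ i.1 i.2).1
    · rintro (⟨r, hr, -⟩ | ⟨c, hc, r, hr, hconj⟩)
      · exact absurd hr (by simp)
      subst hr
      rcases hc with ⟨heq, -⟩ | ⟨b, r', heq, htr⟩
      · exact absurd heq (by simp)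
      injection heq with h'
      injection h' with h1 h2
      have htar : T.trans q a r := by rw [h1, h2]; exact htr
      erw [sat_conjList] at hconj
      obtain ⟨i, hiJ, hni⟩ := hJ2 (some (a, r)) (Or.inr ⟨a, r, rfl, htar⟩)
      exact hni ⟨r, rfl, hconj _ (List.mem_map.2 ⟨i, Finset.mem_toList.2 hiJ, rfl⟩)⟩
  · refine ⟨.dia (.act a .tt), Or.inr ⟨some (a, p'), Or.inr ⟨a, p', rfl, htp⟩,
      p', rfl, trivial⟩, ?_⟩
    rintro (⟨r, hr, -⟩ | ⟨c, hc, r, hr, -⟩)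
    · exact absurd hr (by simp)
    rcases hc with ⟨rfl, -⟩ | ⟨b, r', rfl, htr⟩
    · exact absurd hr (by simp)
    injection hr with h'
    injection h' with h1 h2
    subst h1
    exact hex ⟨r', htr⟩

/-- Hennessy–Milner completeness for the approximants. -/
theorem hm_complete (hBN : BN T) (hFA : FA T) :
    ∀ (n : ℕ) (p q : Proc), ¬ T.approxN n p q →
      ∃ φ : LFF Act false, LFF.sat T φ p ∧ ¬ LFF.sat T φ q := by
  intro n
  induction n with
  | zero => intro p q h; exact absurd trivial h
  | succ n ih =>
    intro p q h
    by_cases h1 : ∀ a p', T.trans p a p' → ∃ q', T.trans q a q' ∧ T.approxN n p' q'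
    · -- first clause holds, so the second must fail
      have h2 : ¬ (T.conv p → T.conv q ∧
          ∀ a q', T.trans q a q' → ∃ p', T.trans p a p' ∧ T.approxN n p' q') := by
        intro h2; exact h ⟨h1, h2⟩
      push_neg at h2
      obtain ⟨hcp, h2⟩ := h2
      by_cases hdq : T.div q
      · exact sep2a hBN hcp hdq
      · obtain ⟨a, q', htq, hnomatch⟩ := h2 hdq
        have hsep : ∀ p'' (h : T.trans p a p''),
            ∃ φ : LFF Act false, LFF.sat T φ p'' ∧ ¬ LFF.sat T φ q' := by
          intro p'' ht
          exact ih p'' q' (hnomatch p'' ht)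
        choose χ hχ using hsep
        exact sep2b hBN hcp htq χ hχ
    · push_neg at h1
      obtain ⟨a, p', htp, hnomatch⟩ := h1
      have hsep : ∀ q' (h : T.trans q a q'),
          ∃ φ : LFF Act false, LFF.sat T φ p' ∧ ¬ LFF.sat T φ q' := by
        intro q' ht
        exact ih p' q' (hnomatch q' ht)
      choose χ hχ using hsep
      exact sep1 hFA htp χ hχ

end Dev3
section Dev4
variable {Proc Act : Type u} {T : LTS Proc Act}

theorem omega_prebisim (hBN : BN T) (hFA : FA T) :
    T.Prebisim T.approxOmega := by
  classical
  intro p q hpq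
  constructor
  · intro a p' htp
    by_contra hcon
    push_neg at hcon
    have hsep : ∀ q' (h : T.trans q a q'),
        ∃ φ : LFF Act false, LFF.sat T φ p' ∧ ¬ LFF.sat T φ q' := by
      intro q' ht
      have : ¬ T.approxOmega p' q' := hcon q' ht
      rw [LTS.approxOmega] at this
      push_neg at this
      obtain ⟨n, hn⟩ := this
      exact hm_complete hBN hFA n p' q' hn
    choose χ hχ using hsep
    obtain ⟨q0, hq0, -⟩ := (hpq 1).1 a p' htp
    set ι := {r : Proc // T.trans q a r} with hι
    set f : ι → LFF Act true := fun i => LFF.act a (χ i.1 i.2) with hf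
    have i0 : ι := ⟨q0, hq0⟩
    have hhyp : ∀ J : Finset ι,
        (∀ i ∈ J, LFF.sat T (f i) none) ∨
          ∃ c ∈ T.capSet q, ∀ i ∈ J, LFF.sat T (f i) c := by
      intro J
      right
      have hsatp : LFF.sat T (.dia (.act a (conjList (J.toList.map (fun i => χ i.1 i.2))))) p := by
        refine Or.inr ⟨some (a, p'), Or.inr ⟨a, p', rfl, htp⟩, p', rfl, ?_⟩
        erw [sat_conjList]
        intro ψ hψ
        simp only [List.mem_map] at hψ
        obtain ⟨i, -, rfl⟩ := hψ
        exact (hχ i.1 i.2).1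
      have hsatq := omega_pres T hpq _ hsatp
      rcases hsatq with ⟨r, hr, -⟩ | ⟨c, hc, r, hr, hconj⟩
      · exact absurd hr (by simp)
      subst hr
      rcases hc with ⟨heq, -⟩ | ⟨b, r', heq, htr⟩
      · exact absurd heq (by simp)
      injection heq with h'
      injection h' with h1 h2
      have htar : T.trans q a r := by rw [h1, h2]; exact htr
      erw [sat_conjList] at hconj
      refine ⟨some (a, r), Or.inr ⟨a, r, rfl, htar⟩, fun i hi => ⟨r, rfl, ?_⟩⟩
      exact hconj _ (List.mem_map.2 ⟨i, Finset.mem_toList.2 hi, rfl⟩)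
    rcases hFA q ι f hhyp with hall | ⟨c, hc, hall⟩
    · obtain ⟨r, hr, -⟩ := hall i0
      exact absurd hr (by simp)
    · rcases hc with ⟨rfl, -⟩ | ⟨b, r, rfl, htr⟩
      · obtain ⟨r, hr, -⟩ := hall i0
        exact absurd hr (by simp)
      · obtain ⟨r', hr', -⟩ := hall i0
        injection hr' with h'
        injection h' with h1 h2
        subst h1
        obtain ⟨r'', hr'', hsr⟩ := hall ⟨r, htr⟩
        injection hr'' with h'
        injection h' with h1 h2
        subst h2
        exact (hχ r htr).2 hsr
  · intro hcp
    have hcq : T.conv q := by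
      intro hdq
      obtain ⟨Φ, h1, h2⟩ := sep2a hBN hcp hdq
      exact h2 (omega_pres T hpq Φ h1)
    refine ⟨hcq, fun a q' htq => ?_⟩
    by_contra hcon
    push_neg at hcon
    have hsep : ∀ p'' (h : T.trans p a p''),
        ∃ φ : LFF Act false, LFF.sat T φ p'' ∧ ¬ LFF.sat T φ q' := by
      intro p'' ht
      have : ¬ T.approxOmega p'' q' := hcon p'' ht
      rw [LTS.approxOmega] at this
      push_neg at this
      obtain ⟨n, hn⟩ := this
      exact hm_complete hBN hFA n p'' q' hn
    choose χ hχ using hsep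
    obtain ⟨Φ, h1, h2⟩ := sep2b hBN hcp htq χ hχ
    exact h2 (omega_pres T hpq Φ h1)

theorem bisim_iff_omega (hBN : BN T) (hFA : FA T) (p q : Proc) :
    T.Bisim p q ↔ T.approxOmega p q :=
  ⟨fun h => bisim_to_omega T h, fun h => ⟨T.approxOmega, omega_prebisim hBN hFA, h⟩⟩

theorem lffincl_to_omega (hBN : BN T) (hFA : FA T) {p q : Proc}
    (h : ∀ φ : LFF Act false, LFF.sat T φ p → LFF.sat T φ q) :
    T.approxOmega p q := by
  intro n
  by_contra hn
  obtain ⟨φ, h1, h2⟩ := hm_complete hBN hFA n p q hn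
  exact h2 (h φ h1)

theorem bisim_iff_lff (hBN : BN T) (hFA : FA T) (p q : Proc) :
    T.Bisim p q ↔ ∀ φ : LFF Act false, LFF.sat T φ p → LFF.sat T φ q :=
  ⟨fun h φ => bisim_pres T h φ,
   fun h => ⟨T.approxOmega, omega_prebisim hBN hFA, lffincl_to_omega hBN hFA h⟩⟩

end Dev4
section Dev5
variable {Proc Act : Type u} {T : LTS Proc Act}

def MonoStmtI (T : LTS Proc Act) : ∀ {b : Bool}, LFI Act b → Prop
  | false, _ => True
  | true, ψ => ∀ c, LFI.sat T ψ none → LFI.sat T ψ c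

theorem monoI_all (T : LTS Proc Act) :
    ∀ (b : Bool) (ψ : LFI Act b), MonoStmtI T ψ
  | false, _ => trivial
  | true, .conj f => fun c h i => monoI_all T true (f i) c (h i)
  | true, .disj f => fun c h => by
      obtain ⟨i, hi⟩ := h; exact ⟨i, monoI_all T true (f i) c hi⟩
  | true, .act a φ => fun c h => by
      obtain ⟨q, hq, -⟩ := h; exact absurd hq (by simp)

theorem mono_none_I (T : LTS Proc Act) (ψ : LFI Act true)
    (c : Option (Act × Proc)) : LFI.sat T ψ none → LFI.sat T ψ c :=
  monoI_all T true ψ c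

def PresStmtI (T : LTS Proc Act) (R : Proc → Proc → Prop) :
    ∀ {b : Bool}, LFI Act b → Prop
  | false, φ => ∀ p q, R p q → LFI.sat T φ p → LFI.sat T φ q
  | true, ψ => ∀ (a : Act) p q, R p q →
      LFI.sat T ψ (some (a, p)) → LFI.sat T ψ (some (a, q))

theorem presI_of_prebisim (T : LTS Proc Act) {R} (hR : T.Prebisim R) :
    ∀ (b : Bool) (φ : LFI Act b), PresStmtI T R φ
  | false, .conj f => fun p q hr h i => presI_of_prebisim T hR false (f i) p q hr (h i)
  | true, .conj f => fun a p q hr h i => presI_of_prebisim T hR true (f i) a p q hr (h i)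
  | false, .disj f => fun p q hr h => by
      obtain ⟨i, hi⟩ := h; exact ⟨i, presI_of_prebisim T hR false (f i) p q hr hi⟩
  | true, .disj f => fun a p q hr h => by
      obtain ⟨i, hi⟩ := h; exact ⟨i, presI_of_prebisim T hR true (f i) a p q hr hi⟩
  | false, .box ψ => by
      have ih := presI_of_prebisim T hR true ψ
      intro p q hr h c hc
      rcases hc with ⟨rfl, hdq⟩ | ⟨a, q', rfl, htr⟩
      · by_cases hdp : T.div p
        · exact h none (Or.inl ⟨rfl, hdp⟩)
        · exact absurd ((hR p q hr).2 hdp).1 (not_not.2 hdq)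
      · by_cases hdp : T.div p
        · exact mono_none_I T ψ _ (h none (Or.inl ⟨rfl, hdp⟩))
        · obtain ⟨_, hback⟩ := (hR p q hr).2 hdp
          obtain ⟨p', htp, hr'⟩ := hback a q' htr
          exact ih a p' q' hr' (h (some (a, p')) (Or.inr ⟨a, p', rfl, htp⟩))
  | false, .dia ψ => by
      have ih := presI_of_prebisim T hR true ψ
      intro p q hr h
      rcases h with h | ⟨c, hc, hsat⟩
      · exact Or.inl h
      rcases hc with ⟨rfl, -⟩ | ⟨a, p', rfl, htp⟩
      · exact Or.inl hsat
      · obtain ⟨q', htq, hr'⟩ := (hR p q hr).1 a p' htp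
        exact Or.inr ⟨some (a, q'), Or.inr ⟨a, q', rfl, htq⟩, ih a p' q' hr' hsat⟩
  | true, .act a φ => by
      have ih := presI_of_prebisim T hR false φ
      intro a' p q hr h
      obtain ⟨r, hr1, hsat⟩ := h
      injection hr1 with h'
      injection h' with h1 h2
      subst h1; subst h2
      exact ⟨q, rfl, ih _ q hr hsat⟩

theorem bisim_presI (T : LTS Proc Act) {p q} (h : T.Bisim p q)
    (φ : LFI Act false) : LFI.sat T φ p → LFI.sat T φ q := by
  obtain ⟨R, hR, hpq⟩ := h
  exact presI_of_prebisim T hR false φ p q hpq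

/-- Embedding of the finitary logic into the infinitary one. -/
def toLFI {Act : Type u} : ∀ {b : Bool}, LFF Act b → LFI Act b
  | _, .tt => .conj (fun x : PEmpty.{u + 1} => x.elim)
  | _, .ff => .disj (fun x : PEmpty.{u + 1} => x.elim)
  | _, .and φ ψ => .conj (fun i : ULift.{u} Bool => if i.down then toLFI φ else toLFI ψ)
  | _, .or φ ψ => .disj (fun i : ULift.{u} Bool => if i.down then toLFI φ else toLFI ψ)
  | _, .box ψ => .box (toLFI ψ)
  | _, .dia ψ => .dia (toLFI ψ)
  | _, .act a φ => .act a (toLFI φ)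

theorem sat_toLFI (T : LTS Proc Act) :
    ∀ {b : Bool} (φ : LFF Act b) (x : LSort Proc Act b),
      LFI.sat T (toLFI φ) x ↔ LFF.sat T φ x
  | _, .tt, x => by
      constructor
      · intro _; trivial
      · intro _ i; exact i.elim
  | _, .ff, x => by
      constructor
      · rintro ⟨i, -⟩; exact i.elim
      · intro h; exact h.elim
  | _, .and φ ψ, x => by
      constructor
      · intro h
        exact ⟨(sat_toLFI T φ x).1 (by simpa using h ⟨true⟩),
               (sat_toLFI T ψ x).1 (by simpa using h ⟨false⟩)⟩
      · rintro ⟨h1, h2⟩ i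
        rcases i with ⟨i⟩
        cases i
        · simpa using (sat_toLFI T ψ x).2 h2
        · simpa using (sat_toLFI T φ x).2 h1
  | _, .or φ ψ, x => by
      constructor
      · rintro ⟨⟨i⟩, hi⟩
        cases i
        · exact Or.inr ((sat_toLFI T ψ x).1 (by simpa using hi))
        · exact Or.inl ((sat_toLFI T φ x).1 (by simpa using hi))
      · rintro (h | h)
        · exact ⟨⟨true⟩, by simpa using (sat_toLFI T φ x).2 h⟩
        · exact ⟨⟨false⟩, by simpa using (sat_toLFI T ψ x).2 h⟩
  | _, .box ψ, x => by
      constructor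
      · intro h c hc; exact (sat_toLFI T ψ c).1 (h c hc)
      · intro h c hc; exact (sat_toLFI T ψ c).2 (h c hc)
  | _, .dia ψ, x => by
      constructor
      · rintro (h | ⟨c, hc, h⟩)
        · exact Or.inl ((sat_toLFI T ψ none).1 h)
        · exact Or.inr ⟨c, hc, (sat_toLFI T ψ c).1 h⟩
      · rintro (h | ⟨c, hc, h⟩)
        · exact Or.inl ((sat_toLFI T ψ none).2 h)
        · exact Or.inr ⟨c, hc, (sat_toLFI T ψ c).2 h⟩
  | _, .act a φ, x => by
      constructor
      · rintro ⟨r, hr, h⟩; exact ⟨r, hr, (sat_toLFI T φ r).1 h⟩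
      · rintro ⟨r, hr, h⟩; exact ⟨r, hr, (sat_toLFI T φ r).2 h⟩

theorem lfi_iff_lff (hBN : BN T) (hFA : FA T) (p q : Proc) :
    (∀ φ : LFI Act false, LFI.sat T φ p → LFI.sat T φ q) ↔
      (∀ φ : LFF Act false, LFF.sat T φ p → LFF.sat T φ q) := by
  constructor
  · intro h φ hφ
    exact (sat_toLFI T φ q).1 (h (toLFI φ) ((sat_toLFI T φ p).2 hφ))
  · intro h φ
    exact bisim_presI T ((bisim_iff_lff hBN hFA p q).2 h) φ

end Dev5
section Dev6
variable {Proc Act : Type u} {T : LTS Proc Act}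

theorem FST.sizeOf_lt_of_mem {a : Act} {c : FST Act} {cs : List (Act × FST Act)}
    {d : Bool} (h : (a, c) ∈ cs) : sizeOf c < sizeOf (FST.node cs d) := by
  have h1 := List.sizeOf_lt_of_mem h
  simp only [FST.node.sizeOf_spec]
  have : sizeOf (a, c) = 1 + sizeOf a + sizeOf c := rfl
  omega

def Below (T : LTS Proc Act) : FST Act → Proc → Prop
  | .node cs d => fun p =>
      (∀ x : {y // y ∈ cs}, ∃ p', T.trans p x.1.1 p' ∧ Below T x.1.2 p') ∧
      (d = false → T.conv p ∧ ∀ a p', T.trans p a p' →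
        ∃ x : {y // y ∈ cs}, x.1.1 = a ∧ Below T x.1.2 p')
  termination_by t => sizeOf t
  decreasing_by
    all_goals
      obtain ⟨⟨b, c⟩, hx⟩ := x
      exact FST.sizeOf_lt_of_mem hx

def BelowTT : FST Act → FST Act → Prop
  | .node cs1 d1 => fun t2 =>
      match t2 with
      | .node cs2 d2 =>
        (∀ x : {y // y ∈ cs1}, ∃ c', (x.1.1, c') ∈ cs2 ∧ BelowTT x.1.2 c') ∧
        (d1 = false → d2 = false ∧ ∀ a c', (a, c') ∈ cs2 →
          ∃ x : {y // y ∈ cs1}, x.1.1 = a ∧ BelowTT x.1.2 c')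
  termination_by t => sizeOf t
  decreasing_by
    all_goals
      obtain ⟨⟨b, c⟩, hx⟩ := x
      exact FST.sizeOf_lt_of_mem hx

theorem below_iff {cs : List (Act × FST Act)} {d : Bool} {p : Proc} :
    Below T (.node cs d) p ↔
      ((∀ a c, (a, c) ∈ cs → ∃ p', T.trans p a p' ∧ Below T c p') ∧
       (d = false → T.conv p ∧
         ∀ a p', T.trans p a p' → ∃ c, (a, c) ∈ cs ∧ Below T c p')) := by
  rw [Below]
  constructor
  · rintro ⟨h1, h2⟩
    refine ⟨fun a c hc => h1 ⟨(a, c), hc⟩, fun hd => ?_⟩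
    obtain ⟨hcv, hb⟩ := h2 hd
    refine ⟨hcv, fun a p' ht => ?_⟩
    obtain ⟨⟨⟨b, c⟩, hm⟩, he, hbl⟩ := hb a p' ht
    exact ⟨c, by rwa [← he], hbl⟩
  · rintro ⟨h1, h2⟩
    refine ⟨fun x => h1 x.1.1 x.1.2 (by obtain ⟨⟨b, c⟩, hm⟩ := x; exact hm), fun hd => ?_⟩
    obtain ⟨hcv, hb⟩ := h2 hd
    refine ⟨hcv, fun a p' ht => ?_⟩
    obtain ⟨c, hm, hbl⟩ := hb a p' ht
    exact ⟨⟨(a, c), hm⟩, rfl, hbl⟩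

theorem belowTT_iff {cs1 : List (Act × FST Act)} {d1 : Bool} {cs2 d2} :
    BelowTT (.node cs1 d1) (.node cs2 d2) ↔
      ((∀ a c, (a, c) ∈ cs1 → ∃ c', (a, c') ∈ cs2 ∧ BelowTT c c') ∧
       (d1 = false → d2 = false ∧
         ∀ a c', (a, c') ∈ cs2 → ∃ c, (a, c) ∈ cs1 ∧ BelowTT c c')) := by
  rw [BelowTT]
  constructor
  · rintro ⟨h1, h2⟩
    refine ⟨fun a c hc => h1 ⟨(a, c), hc⟩, fun hd => ?_⟩
    obtain ⟨hd2, hb⟩ := h2 hd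
    refine ⟨hd2, fun a c' hm => ?_⟩
    obtain ⟨⟨⟨b, c⟩, hmem⟩, he, hbl⟩ := hb a c' hm
    exact ⟨c, by rwa [← he], hbl⟩
  · rintro ⟨h1, h2⟩
    refine ⟨fun x => h1 x.1.1 x.1.2 (by obtain ⟨⟨b, c⟩, hm⟩ := x; exact hm), fun hd => ?_⟩
    obtain ⟨hd2, hb⟩ := h2 hd
    refine ⟨hd2, fun a c' hm => ?_⟩
    obtain ⟨c, hmem, hbl⟩ := hb a c' hm
    exact ⟨⟨(a, c), hmem⟩, rfl, hbl⟩

theorem Below.node {cs : List (Act × FST Act)} {d : Bool} {p : Proc}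
    (h1 : ∀ a c, (a, c) ∈ cs → ∃ p', T.trans p a p' ∧ Below T c p')
    (h2 : d = false → T.conv p ∧
      ∀ a p', T.trans p a p' → ∃ c, (a, c) ∈ cs ∧ Below T c p') :
    Below T (.node cs d) p := below_iff.2 ⟨h1, h2⟩

theorem BelowTT.node {cs1 : List (Act × FST Act)} {d1 : Bool} {cs2 d2}
    (h1 : ∀ a c, (a, c) ∈ cs1 → ∃ c', (a, c') ∈ cs2 ∧ BelowTT c c')
    (h2 : d1 = false → d2 = false ∧
      ∀ a c', (a, c') ∈ cs2 → ∃ c, (a, c) ∈ cs1 ∧ BelowTT c c') :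
    BelowTT (FST.node cs1 d1) (FST.node cs2 d2) := belowTT_iff.2 ⟨h1, h2⟩

theorem belowTT_refl : ∀ t : FST Act, BelowTT t t
  | .node cs d => by
    refine .node (fun a c hc => ⟨c, hc, ?_⟩) (fun hd => ⟨hd, fun a c hc => ⟨c, hc, ?_⟩⟩)
    · exact belowTT_refl c
    · exact belowTT_refl c
  termination_by t => sizeOf t
  decreasing_by all_goals exact FST.sizeOf_lt_of_mem hc

theorem below_to_bisim {t : FST Act} {p : Proc} (h : Below T t p) :
    (combF T).Bisim (.inl t) (.inr p) := by
  refine ⟨fun x y => ∃ t p, x = .inl t ∧ y = .inr p ∧ Below T t p, ?_, t, p, rfl, rfl, h⟩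
  rintro x y ⟨t, p, rfl, rfl, hb⟩
  obtain ⟨cs, d⟩ := t
  obtain ⟨h1, h2⟩ := below_iff.1 hb
  constructor
  · intro a y' htr
    cases y' with
    | inr _ => exact absurd htr (by simp [combF])
    | inl c =>
      have hc : (a, c) ∈ cs := htr
      obtain ⟨p', htp, hb'⟩ := h1 a c hc
      exact ⟨.inr p', htp, c, p', rfl, rfl, hb'⟩
  · intro hcv
    have hd : d = false := by
      by_contra hd
      exact hcv (by simp [combF, LTS.div, Bool.not_eq_false] at hd ⊢; exact hd)
    obtain ⟨hcp, hback⟩ := h2 hd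
    refine ⟨hcp, ?_⟩
    intro a y' htr
    cases y' with
    | inl _ => exact absurd htr (by simp [combF])
    | inr q' =>
      have htq : T.trans p a q' := htr
      obtain ⟨c, hc, hb'⟩ := hback a q' htq
      exact ⟨.inl c, hc, c, q', rfl, rfl, hb'⟩

theorem prebisim_to_below {R} (hR : (combF T).Prebisim R) :
    ∀ (t : FST Act) (p : Proc), R (.inl t) (.inr p) → Below T t p
  | .node cs d, p, hr => by
    refine Below.node ?_ ?_
    · intro a c hc
      obtain ⟨y', htr, hr'⟩ := (hR _ _ hr).1 a (.inl c) hc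
      cases y' with
      | inl _ => exact absurd htr (by simp [combF])
      | inr p' => exact ⟨p', htr, prebisim_to_below hR c p' hr'⟩
    · intro hd
      subst hd
      have hcv : (combF T).conv (.inl (FST.node cs false)) := by
        simp [LTS.conv, combF]
      obtain ⟨hcp, hback⟩ := (hR _ _ hr).2 hcv
      refine ⟨hcp, ?_⟩
      intro a p' htp
      obtain ⟨x', htr, hr'⟩ := hback a (.inr p') htp
      cases x' with
      | inr _ => exact absurd htr (by simp [combF])
      | inl c =>
        have hmem : (a, c) ∈ cs := htr
        exact ⟨c, hmem, prebisim_to_below hR c p' hr'⟩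
  termination_by t => sizeOf t
  decreasing_by all_goals first
    | exact FST.sizeOf_lt_of_mem hc
    | exact FST.sizeOf_lt_of_mem hmem

theorem bisim_to_below {t : FST Act} {p : Proc}
    (h : (combF T).Bisim (.inl t) (.inr p)) : Below T t p := by
  obtain ⟨R, hR, hr⟩ := h
  exact prebisim_to_below hR t p hr

theorem belowTT_to_bisim {t1 t2 : FST Act} (h : BelowTT t1 t2) :
    (combF T).Bisim (.inl t1) (.inl t2) := by
  refine ⟨fun x y => ∃ u v, x = .inl u ∧ y = .inl v ∧ BelowTT u v, ?_, t1, t2, rfl, rfl, h⟩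
  rintro x y ⟨u, v, rfl, rfl, hb⟩
  obtain ⟨cs1, d1⟩ := u
  obtain ⟨cs2, d2⟩ := v
  obtain ⟨h1, h2⟩ := belowTT_iff.1 hb
  constructor
  · intro a y' htr
    cases y' with
    | inr _ => exact absurd htr (by simp [combF])
    | inl c =>
      obtain ⟨c', hc', hb'⟩ := h1 a c htr
      exact ⟨.inl c', hc', c, c', rfl, rfl, hb'⟩
  · intro hcv
    have hd : d1 = false := by
      by_contra hd
      exact hcv (by simp [combF, LTS.div, Bool.not_eq_false] at hd ⊢; exact hd)
    obtain ⟨hd2, hback⟩ := h2 hd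
    constructor
    · simp [LTS.conv, combF, hd2]
    · intro a y' htr
      cases y' with
      | inr _ => exact absurd htr (by simp [combF])
      | inl c' =>
        obtain ⟨c, hc, hb'⟩ := hback a c' htr
        exact ⟨.inl c, hc, c, c', rfl, rfl, hb'⟩

theorem bisim_lift {p q : Proc} (h : T.Bisim p q) :
    (combF T).Bisim (.inr p) (.inr q) := by
  obtain ⟨R, hR, hr⟩ := h
  refine ⟨fun x y => ∃ p q, x = .inr p ∧ y = .inr q ∧ R p q, ?_, p, q, rfl, rfl, hr⟩
  rintro x y ⟨p, q, rfl, rfl, hpq⟩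
  constructor
  · intro a y' htr
    cases y' with
    | inl _ => exact absurd htr (by simp [combF])
    | inr p' =>
      obtain ⟨q', htq, hr'⟩ := (hR p q hpq).1 a p' htr
      exact ⟨.inr q', htq, p', q', rfl, rfl, hr'⟩
  · intro hcv
    obtain ⟨hcq, hback⟩ := (hR p q hpq).2 hcv
    refine ⟨hcq, ?_⟩
    intro a y' htr
    cases y' with
    | inl _ => exact absurd htr (by simp [combF])
    | inr q' =>
      obtain ⟨p', htp, hr'⟩ := hback a q' htr
      exact ⟨.inr p', htp, p', q', rfl, rfl, hr'⟩

theorem bisim_trans {P A : Type u} {S : LTS P A} {x y z : P}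
    (h1 : S.Bisim x y) (h2 : S.Bisim y z) : S.Bisim x z := by
  obtain ⟨R1, hR1, hr1⟩ := h1
  obtain ⟨R2, hR2, hr2⟩ := h2
  refine ⟨fun a c => ∃ b, R1 a b ∧ R2 b c, ?_, y, hr1, hr2⟩
  rintro a c ⟨b, hab, hbc⟩
  constructor
  · intro α a' hta
    obtain ⟨b', htb, hr1'⟩ := (hR1 a b hab).1 α a' hta
    obtain ⟨c', htc, hr2'⟩ := (hR2 b c hbc).1 α b' htb
    exact ⟨c', htc, b', hr1', hr2'⟩
  · intro hca
    obtain ⟨hcb, hback1⟩ := (hR1 a b hab).2 hca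
    obtain ⟨hcc, hback2⟩ := (hR2 b c hbc).2 hcb
    refine ⟨hcc, ?_⟩
    intro α c' htc
    obtain ⟨b', htb, hr2'⟩ := hback2 α c' htc
    obtain ⟨a', hta, hr1'⟩ := hback1 α b' htb
    exact ⟨a', hta, b', hr1', hr2'⟩

/-- Transfer of satisfaction between `T` and `combF T` (on `inr` states). -/
def TransStmt (T : LTS Proc Act) : ∀ {b : Bool}, LFF Act b → Prop
  | false, φ => ∀ p : Proc, LFF.sat (combF T) φ (Sum.inr p) ↔ LFF.sat T φ p
  | true, ψ => (∀ (a : Act) (p : Proc),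
        LFF.sat (combF T) ψ (some (a, Sum.inr p)) ↔ LFF.sat T ψ (some (a, p))) ∧
      (LFF.sat (combF T) ψ (none : Option (Act × (FST Act ⊕ Proc))) ↔
        LFF.sat T ψ (none : Option (Act × Proc)))

theorem trans_all (T : LTS Proc Act) :
    ∀ (b : Bool) (φ : LFF Act b), TransStmt T φ
  | false, .tt => fun _ => Iff.rfl
  | true, .tt => ⟨fun _ _ => Iff.rfl, Iff.rfl⟩
  | false, .ff => fun _ => Iff.rfl
  | true, .ff => ⟨fun _ _ => Iff.rfl, Iff.rfl⟩
  | false, .and φ ψ => fun p =>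
      and_congr (trans_all T false φ p) (trans_all T false ψ p)
  | true, .and φ ψ =>
      ⟨fun a p => and_congr ((trans_all T true φ).1 a p) ((trans_all T true ψ).1 a p),
       and_congr (trans_all T true φ).2 (trans_all T true ψ).2⟩
  | false, .or φ ψ => fun p =>
      or_congr (trans_all T false φ p) (trans_all T false ψ p)
  | true, .or φ ψ =>
      ⟨fun a p => or_congr ((trans_all T true φ).1 a p) ((trans_all T true ψ).1 a p),
       or_congr (trans_all T true φ).2 (trans_all T true ψ).2⟩
  | false, .box ψ => by
      have ih := trans_all T true ψ
      intro p
      constructor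
      · rintro h c (⟨rfl, hd⟩ | ⟨a, q, rfl, ht⟩)
        · exact ih.2.1 (h none (Or.inl ⟨rfl, hd⟩))
        · exact (ih.1 a q).1 (h (some (a, .inr q)) (Or.inr ⟨a, .inr q, rfl, ht⟩))
      · rintro h c (⟨rfl, hd⟩ | ⟨a, y, rfl, ht⟩)
        · exact ih.2.2 (h none (Or.inl ⟨rfl, hd⟩))
        · cases y with
          | inl _ => exact absurd ht (by simp [combF])
          | inr q => exact (ih.1 a q).2 (h (some (a, q)) (Or.inr ⟨a, q, rfl, ht⟩))
  | false, .dia ψ => by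
      have ih := trans_all T true ψ
      intro p
      constructor
      · rintro (h | ⟨c, hc, hs⟩)
        · exact Or.inl (ih.2.1 h)
        rcases hc with ⟨rfl, hd⟩ | ⟨a, y, rfl, ht⟩
        · exact Or.inl (ih.2.1 hs)
        cases y with
        | inl _ => exact absurd ht (by simp [combF])
        | inr q => exact Or.inr ⟨some (a, q), Or.inr ⟨a, q, rfl, ht⟩, (ih.1 a q).1 hs⟩
      · rintro (h | ⟨c, hc, hs⟩)
        · exact Or.inl (ih.2.2 h)
        rcases hc with ⟨rfl, hd⟩ | ⟨a, q, rfl, ht⟩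
        · exact Or.inl (ih.2.2 hs)
        · exact Or.inr ⟨some (a, .inr q), Or.inr ⟨a, .inr q, rfl, ht⟩, (ih.1 a q).2 hs⟩
  | true, .act a φ => by
      have ih := trans_all T false φ
      constructor
      · intro a' p
        constructor
        · rintro ⟨y, hy, hs⟩
          injection hy with h'
          injection h' with h1 h2
          rw [← h2] at hs
          exact ⟨p, by rw [h1], (ih p).1 hs⟩
        · rintro ⟨r, hr, hs⟩
          injection hr with h'
          injection h' with h1 h2
          exact ⟨.inr r, by rw [h1, h2], (ih r).2 hs⟩
      · constructor
        · rintro ⟨y, hy, -⟩; exact absurd hy (by simp)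
        · rintro ⟨r, hr, -⟩; exact absurd hr (by simp)

end Dev6
section Dev7
variable {Proc Act : Type u} {T : LTS Proc Act}

/-- Characteristic formula of a finite synchronisation tree. -/
def chi : FST Act → LFF Act false
  | .node cs d =>
      .and (conjList (cs.attach.map fun x => .dia (.act x.1.1 (chi x.1.2))))
        (if d then .tt
         else .box (disjList (cs.attach.map fun x => .act x.1.1 (chi x.1.2))))
  termination_by t => sizeOf t
  decreasing_by
    all_goals
      obtain ⟨⟨b, c⟩, hx⟩ := x
      exact FST.sizeOf_lt_of_mem hx

theorem sat_chi (T : LTS Proc Act) :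
    ∀ (t : FST Act) (p : Proc), LFF.sat T (chi t) p ↔ Below T t p
  | .node cs d, p => by
    rw [chi, below_iff]
    constructor
    · rintro ⟨hA, hB⟩
      constructor
      · intro a c hmem
        have hmem' : (LFF.dia (.act a (chi c)) : LFF Act false) ∈
            cs.attach.map fun x => LFF.dia (.act x.1.1 (chi x.1.2)) :=
          List.mem_map.2 ⟨⟨(a, c), hmem⟩, List.mem_attach _ _, rfl⟩
        have hdia := (sat_conjList T _ _).1 hA _ hmem'
        rcases hdia with ⟨r, hr, -⟩ | ⟨cap, hcap, r, hr, hs⟩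
        · exact absurd hr (by simp)
        rcases hcap with ⟨rfl, -⟩ | ⟨b, r', rfl, htr⟩
        · exact absurd hr (by simp)
        injection hr with h'
        injection h' with h1 h2
        rw [h1, h2] at htr
        exact ⟨r, htr, (sat_chi T c r).1 hs⟩
      · intro hd
        subst hd
        rw [if_neg (by simp)] at hB
        have hcv : T.conv p := by
          intro hdp
          have := hB none (Or.inl ⟨rfl, hdp⟩)
          erw [sat_disjList] at this
          obtain ⟨ψ, hψ, hs⟩ := this
          simp only [List.mem_map] at hψ
          obtain ⟨x, -, rfl⟩ := hψ
          obtain ⟨r, hr, -⟩ := hs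
          exact absurd hr (by simp)
        refine ⟨hcv, fun a p' ht => ?_⟩
        have := hB (some (a, p')) (Or.inr ⟨a, p', rfl, ht⟩)
        erw [sat_disjList] at this
        obtain ⟨ψ, hψ, hs⟩ := this
        simp only [List.mem_map] at hψ
        obtain ⟨x, -, rfl⟩ := hψ
        obtain ⟨⟨b, c⟩, hmem⟩ := x
        obtain ⟨r, hr, hsr⟩ := hs
        injection hr with h'
        injection h' with h1 h2
        refine ⟨c, by rw [h1]; exact hmem, ?_⟩
        rw [← h2] at hsr
        exact (sat_chi T c p').1 hsr
    · rintro ⟨h1, h2⟩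
      constructor
      · erw [sat_conjList]
        intro ψ hψ
        simp only [List.mem_map] at hψ
        obtain ⟨x, -, rfl⟩ := hψ
        obtain ⟨⟨a, c⟩, hmem⟩ := x
        obtain ⟨p', ht, hb⟩ := h1 a c hmem
        exact Or.inr ⟨some (a, p'), Or.inr ⟨a, p', rfl, ht⟩, p', rfl,
          (sat_chi T c p').2 hb⟩
      · cases d with
        | true => rw [if_pos rfl]; trivial
        | false =>
          rw [if_neg (by simp)]
          obtain ⟨hcv, hback⟩ := h2 rfl
          rintro cap (⟨rfl, hdp⟩ | ⟨a, r, rfl, htr⟩)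
          · exact absurd hdp hcv
          obtain ⟨c, hmem, hb⟩ := hback a r htr
          erw [sat_disjList]
          exact ⟨.act a (chi c),
            List.mem_map.2 ⟨⟨(a, c), hmem⟩, List.mem_attach _ _, rfl⟩,
            r, rfl, (sat_chi T c r).2 hb⟩
  termination_by t => sizeOf t
  decreasing_by all_goals exact FST.sizeOf_lt_of_mem hmem

/-- BN-based finite covering of the successors of a convergent process by trees. -/
theorem cover (hBN : BN T) {p : Proc} (hcv : T.conv p) (G : Act → FST Act → Prop)
    (hG : ∀ b p'', T.trans p b p'' → ∃ c, G b c ∧ Below T c p'') :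
    ∃ l : List (Act × FST Act),
      (∀ x ∈ l, G x.1 x.2 ∧ ∃ p', T.trans p x.1 p' ∧ Below T x.2 p') ∧
      (∀ b p'', T.trans p b p'' → ∃ c, (b, c) ∈ l ∧ G b c ∧ Below T c p'') := by
  classical
  choose g hg1 hg2 using hG
  set ι := {x : Act × Proc // T.trans p x.1 x.2} with hι
  set f : ι → LFF Act true := fun i => .act i.1.1 (chi (g i.1.1 i.1.2 i.2)) with hf
  have hcov : ∀ c ∈ T.capSet p, ∃ i, LFF.sat T (f i) c := by
    rintro c (⟨rfl, hd⟩ | ⟨b, r, rfl, ht⟩)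
    · exact absurd hd hcv
    · exact ⟨⟨(b, r), ht⟩, r, rfl, (sat_chi T _ _).2 (hg2 b r ht)⟩
  obtain ⟨J, hJ⟩ := hBN p ι f hcov
  refine ⟨J.toList.map (fun i => (i.1.1, g i.1.1 i.1.2 i.2)), ?_, ?_⟩
  · intro x hx
    simp only [List.mem_map] at hx
    obtain ⟨i, -, rfl⟩ := hx
    exact ⟨hg1 _ _ _, i.1.2, i.2, hg2 _ _ _⟩
  · intro b p'' ht
    obtain ⟨i, hiJ, hsat⟩ := hJ (some (b, p'')) (Or.inr ⟨b, p'', rfl, ht⟩)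
    obtain ⟨r, hr, hs⟩ := hsat
    injection hr with h'
    injection h' with h1 h2
    rw [← h2] at hs
    have hb := (sat_chi T _ _).1 hs
    refine ⟨g i.1.1 i.1.2 i.2, ?_, ?_, hb⟩
    · rw [h1]
      exact List.mem_map.2 ⟨i, Finset.mem_toList.2 hiJ, rfl⟩
    · rw [h1]
      exact hg1 _ _ _

end Dev7
section Dev8
variable {Proc Act : Type u} {T : LTS Proc Act}

theorem join2 (hBN : BN T) :
    ∀ (N : ℕ) (t1 t2 : FST Act) (p : Proc), sizeOf t1 + sizeOf t2 ≤ N →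
      Below T t1 p → Below T t2 p →
      ∃ t, Below T t p ∧ BelowTT t1 t ∧ BelowTT t2 t := by
  intro N
  induction N with
  | zero =>
    intro t1 t2 p h
    exfalso
    obtain ⟨cs1, d1⟩ := t1
    simp only [FST.node.sizeOf_spec] at h
    omega
  | succ N ih =>
    intro t1 t2 p hN hb1 hb2
    obtain ⟨cs1, d1⟩ := t1
    obtain ⟨cs2, d2⟩ := t2
    obtain ⟨h1f, h1b⟩ := below_iff.1 hb1
    obtain ⟨h2f, h2b⟩ := below_iff.1 hb2
    have hjoin : ∀ a1 c1 a2 c2 p', (a1, c1) ∈ cs1 → (a2, c2) ∈ cs2 →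
        Below T c1 p' → Below T c2 p' →
        ∃ t, Below T t p' ∧ BelowTT c1 t ∧ BelowTT c2 t := by
      intro a1 c1 a2 c2 p' hm1 hm2 hbc1 hbc2
      refine ih c1 c2 p' ?_ hbc1 hbc2
      have e1 := FST.sizeOf_lt_of_mem (d := d1) hm1
      have e2 := FST.sizeOf_lt_of_mem (d := d2) hm2
      omega
    cases d1 with
    | true =>
      cases d2 with
      | true =>
        refine ⟨.node (cs1 ++ cs2) true, ?_, ?_, ?_⟩
        · refine Below.node (fun a c hc => ?_) (fun h => by simp at h)
          exact (List.mem_append.1 hc).elim (h1f a c) (h2f a c)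
        · exact BelowTT.node
            (fun a c hc => ⟨c, List.mem_append_left _ hc, belowTT_refl c⟩)
            (fun h => by simp at h)
        · exact BelowTT.node
            (fun a c hc => ⟨c, List.mem_append_right _ hc, belowTT_refl c⟩)
            (fun h => by simp at h)
      | false =>
        -- t1 divergent, t2 convergent
        obtain ⟨hcv, hback2⟩ := h2b rfl
        have key : ∀ x : {y // y ∈ cs1}, ∃ t' c2 p', T.trans p x.1.1 p' ∧
            Below T t' p' ∧ BelowTT x.1.2 t' ∧ (x.1.1, c2) ∈ cs2 ∧ BelowTT c2 t' := by
          rintro ⟨⟨a, c1⟩, hm⟩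
          obtain ⟨p', ht, hbc1⟩ := h1f a c1 hm
          obtain ⟨c2, hm2, hbc2⟩ := hback2 a p' ht
          obtain ⟨t', hbt', hTT1, hTT2⟩ := hjoin a c1 a c2 p' hm hm2 hbc1 hbc2
          exact ⟨t', c2, p', ht, hbt', hTT1, hm2, hTT2⟩
        choose jt jc jp hjt hjb hjTT1 hjm2 hjTT2 using key
        refine ⟨.node (cs2 ++ cs1.attach.map (fun x => (x.1.1, jt x))) false, ?_, ?_, ?_⟩
        · refine Below.node (fun a c hc => ?_) (fun _ => ⟨hcv, fun a p' ht => ?_⟩)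
          · rcases List.mem_append.1 hc with hc | hc
            · exact h2f a c hc
            · simp only [List.mem_map] at hc
              obtain ⟨x, -, heq⟩ := hc
              injection heq with e1 e2
              rw [← e1, ← e2]
              exact ⟨jp x, hjt x, hjb x⟩
          · obtain ⟨c2, hm2, hbc2⟩ := hback2 a p' ht
            exact ⟨c2, List.mem_append_left _ hm2, hbc2⟩
        · refine BelowTT.node (fun a c hc => ?_) (fun h => by simp at h)
          refine ⟨jt ⟨(a, c), hc⟩, ?_, hjTT1 ⟨(a, c), hc⟩⟩
          exact List.mem_append_right _ (List.mem_map.2 ⟨⟨(a, c), hc⟩, List.mem_attach _ _, rfl⟩)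
        · refine BelowTT.node (fun a c hc => ⟨c, List.mem_append_left _ hc, belowTT_refl c⟩)
            (fun _ => ⟨rfl, fun a c' hc' => ?_⟩)
          rcases List.mem_append.1 hc' with hc' | hc'
          · exact ⟨c', hc', belowTT_refl c'⟩
          · simp only [List.mem_map] at hc'
            obtain ⟨x, -, heq⟩ := hc'
            injection heq with e1 e2
            refine ⟨jc x, ?_, ?_⟩
            · rw [← e1]; exact hjm2 x
            · rw [← e2]; exact hjTT2 x
    | false =>
      obtain ⟨hcv, hback1⟩ := h1b rfl
      cases d2 with
      | true =>
        -- t1 convergent, t2 divergent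
        have key : ∀ x : {y // y ∈ cs2}, ∃ t' c1 p', T.trans p x.1.1 p' ∧
            Below T t' p' ∧ BelowTT x.1.2 t' ∧ (x.1.1, c1) ∈ cs1 ∧ BelowTT c1 t' := by
          rintro ⟨⟨a, c2⟩, hm⟩
          obtain ⟨p', ht, hbc2⟩ := h2f a c2 hm
          obtain ⟨c1, hm1, hbc1⟩ := hback1 a p' ht
          obtain ⟨t', hbt', hTT1, hTT2⟩ := hjoin a c1 a c2 p' hm1 hm hbc1 hbc2
          exact ⟨t', c1, p', ht, hbt', hTT2, hm1, hTT1⟩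
        choose jt jc jp hjt hjb hjTT2 hjm1 hjTT1 using key
        refine ⟨.node (cs1 ++ cs2.attach.map (fun x => (x.1.1, jt x))) false, ?_, ?_, ?_⟩
        · refine Below.node (fun a c hc => ?_) (fun _ => ⟨hcv, fun a p' ht => ?_⟩)
          · rcases List.mem_append.1 hc with hc | hc
            · exact h1f a c hc
            · simp only [List.mem_map] at hc
              obtain ⟨x, -, heq⟩ := hc
              injection heq with e1 e2
              rw [← e1, ← e2]
              exact ⟨jp x, hjt x, hjb x⟩
          · obtain ⟨c1, hm1, hbc1⟩ := hback1 a p' ht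
            exact ⟨c1, List.mem_append_left _ hm1, hbc1⟩
        · refine BelowTT.node (fun a c hc => ⟨c, List.mem_append_left _ hc, belowTT_refl c⟩)
            (fun _ => ⟨rfl, fun a c' hc' => ?_⟩)
          rcases List.mem_append.1 hc' with hc' | hc'
          · exact ⟨c', hc', belowTT_refl c'⟩
          · simp only [List.mem_map] at hc'
            obtain ⟨x, -, heq⟩ := hc'
            injection heq with e1 e2
            refine ⟨jc x, ?_, ?_⟩
            · rw [← e1]; exact hjm1 x
            · rw [← e2]; exact hjTT1 x
        · refine BelowTT.node (fun a c hc => ?_) (fun h => by simp at h)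
          refine ⟨jt ⟨(a, c), hc⟩, ?_, hjTT2 ⟨(a, c), hc⟩⟩
          exact List.mem_append_right _ (List.mem_map.2 ⟨⟨(a, c), hc⟩, List.mem_attach _ _, rfl⟩)
      | false =>
        -- both convergent
        obtain ⟨-, hback2⟩ := h2b rfl
        have keyA : ∀ x : {y // y ∈ cs1}, ∃ t' c2 p', T.trans p x.1.1 p' ∧
            Below T t' p' ∧ BelowTT x.1.2 t' ∧ (x.1.1, c2) ∈ cs2 ∧ BelowTT c2 t' := by
          rintro ⟨⟨a, c1⟩, hm⟩
          obtain ⟨p', ht, hbc1⟩ := h1f a c1 hm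
          obtain ⟨c2, hm2, hbc2⟩ := hback2 a p' ht
          obtain ⟨t', hbt', hTT1, hTT2⟩ := hjoin a c1 a c2 p' hm hm2 hbc1 hbc2
          exact ⟨t', c2, p', ht, hbt', hTT1, hm2, hTT2⟩
        have keyB : ∀ x : {y // y ∈ cs2}, ∃ t' c1 p', T.trans p x.1.1 p' ∧
            Below T t' p' ∧ BelowTT x.1.2 t' ∧ (x.1.1, c1) ∈ cs1 ∧ BelowTT c1 t' := by
          rintro ⟨⟨a, c2⟩, hm⟩
          obtain ⟨p', ht, hbc2⟩ := h2f a c2 hm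
          obtain ⟨c1, hm1, hbc1⟩ := hback1 a p' ht
          obtain ⟨t', hbt', hTT1, hTT2⟩ := hjoin a c1 a c2 p' hm1 hm hbc1 hbc2
          exact ⟨t', c1, p', ht, hbt', hTT2, hm1, hTT1⟩
        choose At Ac Ap hAt hAb hATT1 hAm2 hATT2 using keyA
        choose Bt Bc Bp hBt hBb hBTT2 hBm1 hBTT1 using keyB
        have hG : ∀ b p'', T.trans p b p'' →
            ∃ c, ((∃ c1, (b, c1) ∈ cs1 ∧ BelowTT c1 c) ∧
                  (∃ c2, (b, c2) ∈ cs2 ∧ BelowTT c2 c)) ∧ Below T c p'' := by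
          intro b p'' ht
          obtain ⟨c1, hm1, hbc1⟩ := hback1 b p'' ht
          obtain ⟨c2, hm2, hbc2⟩ := hback2 b p'' ht
          obtain ⟨t', hbt', hTT1, hTT2⟩ := hjoin b c1 b c2 p'' hm1 hm2 hbc1 hbc2
          exact ⟨t', ⟨⟨c1, hm1, hTT1⟩, ⟨c2, hm2, hTT2⟩⟩, hbt'⟩
        obtain ⟨l, hl1, hl2⟩ := cover hBN hcv _ hG
        set ch := (cs1.attach.map (fun x => (x.1.1, At x))) ++
          ((cs2.attach.map (fun x => (x.1.1, Bt x))) ++ l) with hch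
        have hmem_ch : ∀ a c, (a, c) ∈ ch →
            (∃ x : {y // y ∈ cs1}, x.1.1 = a ∧ At x = c) ∨
            (∃ x : {y // y ∈ cs2}, x.1.1 = a ∧ Bt x = c) ∨ (a, c) ∈ l := by
          intro a c hc
          rcases List.mem_append.1 hc with hc | hc
          · simp only [List.mem_map] at hc
            obtain ⟨x, -, heq⟩ := hc
            injection heq with e1 e2
            exact Or.inl ⟨x, e1, e2⟩
          rcases List.mem_append.1 hc with hc | hc
          · simp only [List.mem_map] at hc
            obtain ⟨x, -, heq⟩ := hc
            injection heq with e1 e2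
            exact Or.inr (Or.inl ⟨x, e1, e2⟩)
          · exact Or.inr (Or.inr hc)
        refine ⟨.node ch false, ?_, ?_, ?_⟩
        · refine Below.node (fun a c hc => ?_) (fun _ => ⟨hcv, fun a p' ht => ?_⟩)
          · rcases hmem_ch a c hc with ⟨x, e1, e2⟩ | ⟨x, e1, e2⟩ | hc
            · rw [← e1, ← e2]; exact ⟨Ap x, hAt x, hAb x⟩
            · rw [← e1, ← e2]; exact ⟨Bp x, hBt x, hBb x⟩
            · exact (hl1 _ hc).2
          · obtain ⟨c, hcl, -, hbc⟩ := hl2 a p' ht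
            exact ⟨c, List.mem_append_right _ (List.mem_append_right _ hcl), hbc⟩
        · refine BelowTT.node (fun a c hc => ?_) (fun _ => ⟨rfl, fun a c' hc' => ?_⟩)
          · refine ⟨At ⟨(a, c), hc⟩, ?_, hATT1 ⟨(a, c), hc⟩⟩
            exact List.mem_append_left _
              (List.mem_map.2 ⟨⟨(a, c), hc⟩, List.mem_attach _ _, rfl⟩)
          · rcases hmem_ch a c' hc' with ⟨x, e1, e2⟩ | ⟨x, e1, e2⟩ | hcl
            · refine ⟨x.1.2, ?_, ?_⟩
              · rw [← e1]
                obtain ⟨⟨b, cc⟩, hm⟩ := x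
                exact hm
              · rw [← e2]; exact hATT1 x
            · refine ⟨Bc x, ?_, ?_⟩
              · rw [← e1]; exact hBm1 x
              · rw [← e2]; exact hBTT1 x
            · obtain ⟨⟨⟨c1, hm1, hTT1⟩, -⟩, -⟩ := hl1 _ hcl
              exact ⟨c1, hm1, hTT1⟩
        · refine BelowTT.node (fun a c hc => ?_) (fun _ => ⟨rfl, fun a c' hc' => ?_⟩)
          · refine ⟨Bt ⟨(a, c), hc⟩, ?_, hBTT2 ⟨(a, c), hc⟩⟩
            exact List.mem_append_right _ (List.mem_append_left _
              (List.mem_map.2 ⟨⟨(a, c), hc⟩, List.mem_attach _ _, rfl⟩))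
          · rcases hmem_ch a c' hc' with ⟨x, e1, e2⟩ | ⟨x, e1, e2⟩ | hcl
            · refine ⟨Ac x, ?_, ?_⟩
              · rw [← e1]; exact hAm2 x
              · rw [← e2]; exact hATT2 x
            · refine ⟨x.1.2, ?_, ?_⟩
              · rw [← e1]
                obtain ⟨⟨b, cc⟩, hm⟩ := x
                exact hm
              · rw [← e2]; exact hBTT2 x
            · obtain ⟨⟨-, ⟨c2, hm2, hTT2⟩⟩, -⟩ := hl1 _ hcl
              exact ⟨c2, hm2, hTT2⟩

end Dev8
section Dev9
variable {Proc Act : Type u} {T : LTS Proc Act}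

/-- Divergent nil tree is below everything. -/
theorem below_divnil (p : Proc) : Below T (.node ([] : List (Act × FST Act)) true) p :=
  Below.node (by simp) (fun h => by simp at h)

def MainStmt (T : LTS Proc Act) : ∀ {b : Bool}, LFF Act b → Prop
  | false, φ => ∀ p : Proc, LFF.sat T φ p →
      ∃ t, Below T t p ∧ LFF.sat (combF T) φ (Sum.inl t)
  | true, ψ => ∀ (a : Act) (p : Proc), LFF.sat T ψ (some (a, p)) →
      ∃ t, Below T t p ∧ LFF.sat (combF T) ψ (some (a, Sum.inl t))

theorem main_all (hBN : BN T) : ∀ (b : Bool) (φ : LFF Act b), MainStmt T φ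
  | false, .tt => fun p _ => ⟨.node [] true, below_divnil p, trivial⟩
  | true, .tt => fun a p _ => ⟨.node [] true, below_divnil p, trivial⟩
  | false, .ff => fun _ h => h.elim
  | true, .ff => fun _ _ h => h.elim
  | false, .and φ ψ => by
      rintro p ⟨h1, h2⟩
      obtain ⟨t1, hb1, hs1⟩ := main_all hBN false φ p h1
      obtain ⟨t2, hb2, hs2⟩ := main_all hBN false ψ p h2
      obtain ⟨t, hb, hTT1, hTT2⟩ := join2 hBN _ t1 t2 p le_rfl hb1 hb2
      obtain ⟨R1, hR1, hr1⟩ := belowTT_to_bisim (T := T) hTT1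
      obtain ⟨R2, hR2, hr2⟩ := belowTT_to_bisim (T := T) hTT2
      exact ⟨t, hb, pres_of_prebisim _ hR1 false φ _ _ hr1 hs1,
        pres_of_prebisim _ hR2 false ψ _ _ hr2 hs2⟩
  | true, .and φ ψ => by
      rintro a p ⟨h1, h2⟩
      obtain ⟨t1, hb1, hs1⟩ := main_all hBN true φ a p h1
      obtain ⟨t2, hb2, hs2⟩ := main_all hBN true ψ a p h2
      obtain ⟨t, hb, hTT1, hTT2⟩ := join2 hBN _ t1 t2 p le_rfl hb1 hb2
      obtain ⟨R1, hR1, hr1⟩ := belowTT_to_bisim (T := T) hTT1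
      obtain ⟨R2, hR2, hr2⟩ := belowTT_to_bisim (T := T) hTT2
      exact ⟨t, hb, pres_of_prebisim _ hR1 true φ a _ _ hr1 hs1,
        pres_of_prebisim _ hR2 true ψ a _ _ hr2 hs2⟩
  | false, .or φ ψ => by
      rintro p (h | h)
      · obtain ⟨t, hb, hs⟩ := main_all hBN false φ p h
        exact ⟨t, hb, Or.inl hs⟩
      · obtain ⟨t, hb, hs⟩ := main_all hBN false ψ p h
        exact ⟨t, hb, Or.inr hs⟩
  | true, .or φ ψ => by
      rintro a p (h | h)
      · obtain ⟨t, hb, hs⟩ := main_all hBN true φ a p h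
        exact ⟨t, hb, Or.inl hs⟩
      · obtain ⟨t, hb, hs⟩ := main_all hBN true ψ a p h
        exact ⟨t, hb, Or.inr hs⟩
  | false, .box ψ => by
      intro p h
      by_cases hdp : T.div p
      · refine ⟨.node [] true, below_divnil p, ?_⟩
        rintro c (⟨rfl, -⟩ | ⟨a, y, rfl, ht⟩)
        · exact (trans_all T true ψ).2.2 (h none (Or.inl ⟨rfl, hdp⟩))
        · cases y with
          | inl c' => exact absurd ht (by simp [combF])
          | inr q => exact absurd ht (by simp [combF])
      · have hcv : T.conv p := hdp
        have hG : ∀ b p'', T.trans p b p'' →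
            ∃ c, LFF.sat (combF T) ψ (some (b, Sum.inl c)) ∧ Below T c p'' := by
          intro b p'' ht
          obtain ⟨t, hb, hs⟩ := main_all hBN true ψ b p''
            (h (some (b, p'')) (Or.inr ⟨b, p'', rfl, ht⟩))
          exact ⟨t, hs, hb⟩
        obtain ⟨l, hl1, hl2⟩ := cover hBN hcv _ hG
        refine ⟨.node l false, Below.node (fun a c hc => (hl1 _ hc).2)
          (fun _ => ⟨hcv, fun a p' ht => ?_⟩), ?_⟩
        · obtain ⟨c, hcl, -, hbc⟩ := hl2 a p' ht
          exact ⟨c, hcl, hbc⟩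
        · rintro c (⟨rfl, hd⟩ | ⟨a, y, rfl, ht⟩)
          · exact absurd hd (by simp [combF])
          · cases y with
            | inr q => exact absurd ht (by simp [combF])
            | inl c' =>
              have hm : (a, c') ∈ l := ht
              exact (hl1 _ hm).1
  | false, .dia ψ => by
      intro p h
      rcases h with h | ⟨c, hc, hs⟩
      · exact ⟨.node [] true, below_divnil p, Or.inl ((trans_all T true ψ).2.2 h)⟩
      rcases hc with ⟨rfl, -⟩ | ⟨a, p', rfl, ht⟩
      · exact ⟨.node [] true, below_divnil p, Or.inl ((trans_all T true ψ).2.2 hs)⟩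
      · obtain ⟨c', hb, hsc⟩ := main_all hBN true ψ a p' hs
        refine ⟨.node [(a, c')] true, Below.node ?_ (fun h => by simp at h), ?_⟩
        · intro b cc hm
          rw [List.mem_singleton] at hm
          injection hm with e1 e2
          rw [e1, e2]
          exact ⟨p', ht, hb⟩
        · refine Or.inr ⟨some (a, Sum.inl c'), Or.inr ⟨a, Sum.inl c', rfl, ?_⟩, hsc⟩
          show (a, c') ∈ [(a, c')]
          exact List.mem_singleton_self _
  | true, .act a φ => by
      intro a' p h
      obtain ⟨r, hr, hs⟩ := h
      injection hr with h'
      injection h' with e1 e2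
      obtain ⟨t, hb, hsc⟩ := main_all hBN false φ r hs
      exact ⟨t, by rw [e2]; exact hb, Sum.inl t, by rw [e1], hsc⟩

theorem bisim_iff_finpre (hBN : BN T) (hFA : FA T) (p q : Proc) :
    T.Bisim p q ↔ FinPre T p q := by
  constructor
  · intro h t ht
    exact bisim_trans ht (bisim_lift h)
  · intro h
    refine (bisim_iff_lff hBN hFA p q).2 ?_
    intro φ hφ
    obtain ⟨t, hb, hs⟩ := main_all hBN false φ p hφ
    obtain ⟨R, hR, hr⟩ := h t (below_to_bisim hb)
    exact (trans_all T false φ q).1 (pres_of_prebisim _ hR false φ _ _ hr hs)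

end Dev9

/-- In any finitary transition system (one satisfying (BN) and (FA)):
inclusion of infinitary theories coincides with inclusion of finitary theories,
and `≲^B = ≲_ω = ≲^F`, all coinciding with inclusion of finitary theories. -/
theorem finitary_ts_characterisation {Proc Act : Type u} (T : LTS Proc Act)
    (hBN : BN T) (hFA : FA T) :
    (∀ p q : Proc,
      (∀ φ : LFI Act false, LFI.sat T φ p → LFI.sat T φ q) ↔
      (∀ φ : LFF Act false, LFF.sat T φ p → LFF.sat T φ q)) ∧
    (∀ p q : Proc, T.Bisim p q ↔ T.approxOmega p q) ∧
    (∀ p q : Proc, T.Bisim p q ↔ FinPre T p q) ∧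
    (∀ p q : Proc, T.Bisim p q ↔
      ∀ φ : LFF Act false, LFF.sat T φ p → LFF.sat T φ q) := by
  exact ⟨fun p q => lfi_iff_lff hBN hFA p q,
    fun p q => bisim_iff_omega hBN hFA p q,
    fun p q => bisim_iff_finpre hBN hFA p q,
    fun p q => bisim_iff_lff hBN hFA p q⟩
end
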